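/- arXiv:1706.00529 — 3 statements merged into one kernel-verified Lean document; each statement's English description precedes it below -/
import Mathlib

section
/- The map f' is injective on the set of transpositions of S_n, and the map F : NC(S_n) → {subspaces of 𝔽₂^{n−1}} satisfies: (i) F is order-preserving, i.e. v ≤ w in absolute order implies F(v) ⊆ F(w); (ii) dim F(w) = ℓ(w) for every w ∈ NC(S_n); (iii) F is injective on NC(S_n). In particular F is a rank-preserving embedding of the noncrossing partition lattice of type A_{n−1} into the lattice of linear subspaces of 𝔽₂^{n−1}. -/
namespace NCPaper

variable {G : Type*} [Group G]

/-- `lenT T w` is the least `k` such that `w` is a product of `k` elements of `T`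
(the reflection length with respect to `T`). -/
noncomputable def lenT (T : Set G) (w : G) : ℕ :=
  sInf {k | ∃ l : List G, (∀ t ∈ l, t ∈ T) ∧ l.length = k ∧ l.prod = w}

/-- The absolute order with respect to the generating set `T`. -/
def absLe (T : Set G) (v w : G) : Prop :=
  lenT T w = lenT T v + lenT T (v⁻¹ * w)

/-- Strict absolute order. -/
def absLt (T : Set G) (v w : G) : Prop := absLe T v w ∧ v ≠ w

/-- The noncrossing partition lattice `NC(W, c)`: the interval `[1, c]` in absolute order. -/
def NC (T : Set G) (c : G) : Set G := {w | absLe T w c}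

/-- A maximal chain `(w_0, …, w_k)` in `NC(W, c)`. -/
def IsNCMaxChain (T : Set G) (c : G) {k : ℕ} (w : Fin (k+1) → G) : Prop :=
  w 0 = 1 ∧ w (Fin.last k) = c ∧ (∀ i, w i ∈ NC T c) ∧
  (∀ i : Fin (k+1), lenT T (w i) = i.val) ∧
  ∀ i : Fin k, absLt T (w i.castSucc) (w i.succ)

/-- The Hurwitz graph: vertices are the maximal chains of `NC(W,c)`, and two chains are
adjacent iff they differ in exactly one entry. -/
def hurwitzGraph (T : Set G) (c : G) (k : ℕ) :
    SimpleGraph {w : Fin (k+1) → G // IsNCMaxChain T c w} where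
  Adj a b := ∃! i, a.1 i ≠ b.1 i
  symm := by
    constructor
    rintro a b ⟨i, hi, hu⟩
    exact ⟨i, hi.symm, fun j hj => hu j hj.symm⟩
  loopless := by constructor; rintro a ⟨i, hi, _⟩; exact hi rfl

/-- The set of transpositions (reflections) of the symmetric group `S_n`. -/
def ST (n : ℕ) : Set (Equiv.Perm (Fin n)) := {t | t.IsSwap}

end NCPaper
namespace NCPaper

/-- The image of the `i`-th vertex of the `n`-gon in `𝔽₂^{n-1}`: the basis vector `e_i`
for `i < n-1`, and `0` for the last vertex. -/
def vvec (n : ℕ) (i : Fin n) : Fin (n-1) → ZMod 2 :=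
  if h : i.val < n - 1 then Pi.single (⟨i.val, h⟩ : Fin (n-1)) 1 else 0

/-- `lineOfA n t L` says that `t` is the transposition `(i,j)` and `L` is the line
`f'(t)`, i.e. `span {e_i + e_j}` for `j < n` resp. `span {e_i}` for `j = n`. -/
def lineOfA (n : ℕ) (t : Equiv.Perm (Fin n))
    (L : Submodule (ZMod 2) (Fin (n-1) → ZMod 2)) : Prop :=
  ∃ i j : Fin n, i ≠ j ∧ t = Equiv.swap i j ∧
    L = Submodule.span (ZMod 2) {vvec n i + vvec n j}

/-- `FA n w` is the subspace of `𝔽₂^{n-1}` spanned by the union of the lines `f'(t)`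
over all transpositions `t ≤ w` in absolute order. -/
def FA (n : ℕ) (w : Equiv.Perm (Fin n)) : Submodule (ZMod 2) (Fin (n-1) → ZMod 2) :=
  sSup {L | ∃ t, lineOfA n t L ∧ absLe (ST n) t w}


end NCPaper
section Lemmas
namespace NCPaper

open Equiv Equiv.Perm Submodule Module

variable {n : ℕ}

/-! ### lenT basics -/

lemma lenT_set_nonempty (w : Perm (Fin n)) :
    {k | ∃ l : List (Perm (Fin n)), (∀ t ∈ l, t ∈ ST n) ∧ l.length = k ∧ l.prod = w}.Nonempty := by
  obtain ⟨l, hl1, hl2⟩ := (truncSwapFactors w).out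
  exact ⟨l.length, l, fun t ht => hl2 t ht, rfl, hl1⟩

lemma lenT_spec (w : Perm (Fin n)) :
    ∃ l : List (Perm (Fin n)), (∀ t ∈ l, t ∈ ST n) ∧ l.length = lenT (ST n) w ∧ l.prod = w :=
  Nat.sInf_mem (lenT_set_nonempty w)

lemma lenT_le {w : Perm (Fin n)} {l : List (Perm (Fin n))} (h1 : ∀ t ∈ l, t ∈ ST n)
    (h2 : l.prod = w) : lenT (ST n) w ≤ l.length :=
  Nat.sInf_le ⟨l, h1, rfl, h2⟩

lemma lenT_one : lenT (ST n) (1 : Perm (Fin n)) = 0 :=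
  Nat.le_zero.mp (lenT_le (l := []) (by simp) rfl)

lemma lenT_mul_le (x y : Perm (Fin n)) :
    lenT (ST n) (x * y) ≤ lenT (ST n) x + lenT (ST n) y := by
  obtain ⟨l1, a1, b1, c1⟩ := lenT_spec x
  obtain ⟨l2, a2, b2, c2⟩ := lenT_spec y
  have h := lenT_le (w := x * y) (l := l1 ++ l2) ?_ ?_
  · simpa [b1, b2] using h
  · intro t ht
    rcases List.mem_append.mp ht with h | h
    exacts [a1 t h, a2 t h]
  · simp [c1, c2]

lemma lenT_eq_zero_iff {w : Perm (Fin n)} : lenT (ST n) w = 0 ↔ w = 1 := by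
  constructor
  · intro h
    obtain ⟨l, _, hlen, hp⟩ := lenT_spec w
    rw [h] at hlen
    rw [List.length_eq_zero_iff.mp hlen] at hp
    simpa using hp.symm
  · rintro rfl; exact lenT_one

lemma lenT_swap {t : Perm (Fin n)} (ht : t ∈ ST n) : lenT (ST n) t = 1 := by
  have h1 : lenT (ST n) t ≤ 1 := by
    have := lenT_le (w := t) (l := [t]) (by simpa using ht) (by simp)
    simpa using this
  have h0 : lenT (ST n) t ≠ 0 := by
    intro h
    obtain ⟨i, j, hij, hts⟩ := ht
    have h1t := lenT_eq_zero_iff.mp h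
    rw [hts] at h1t
    have := Equiv.congr_fun h1t i
    rw [Equiv.swap_apply_left, Equiv.Perm.one_apply] at this
    exact hij this.symm
  omega

lemma conj_list_prod (g : Perm (Fin n)) (l : List (Perm (Fin n))) :
    (l.map fun t => g * t * g⁻¹).prod = g * l.prod * g⁻¹ := by
  induction l with
  | nil => simp
  | cons a l ih => simp only [List.map_cons, List.prod_cons, ih, List.prod_cons]; group

lemma lenT_conj_le (g w : Perm (Fin n)) : lenT (ST n) (g * w * g⁻¹) ≤ lenT (ST n) w := by
  obtain ⟨l, a, b, c⟩ := lenT_spec w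
  have h := lenT_le (w := g * w * g⁻¹) (l := l.map fun t => g * t * g⁻¹) ?_ ?_
  · simpa [b] using h
  · intro t ht
    simp only [List.mem_map] at ht
    obtain ⟨s, hs, rfl⟩ := ht
    obtain ⟨i, j, hij, rfl⟩ := a s hs
    exact ⟨g i, g j, fun h => hij (g.injective h), (Equiv.swap_apply_apply g i j).symm⟩
  · rw [conj_list_prod, c]

lemma lenT_conj (g w : Perm (Fin n)) : lenT (ST n) (g * w * g⁻¹) = lenT (ST n) w := by
  refine le_antisymm (lenT_conj_le g w) ?_
  have := lenT_conj_le g⁻¹ (g * w * g⁻¹)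
  simpa [mul_assoc] using this

lemma absLe_trans {t v w : Perm (Fin n)} (h1 : absLe (ST n) t v) (h2 : absLe (ST n) v w) :
    absLe (ST n) t w := by
  unfold absLe at *
  have hle : lenT (ST n) w ≤ lenT (ST n) t + lenT (ST n) (t⁻¹ * w) := by
    have := lenT_mul_le t (t⁻¹ * w)
    simpa [mul_assoc] using this
  have h3 : lenT (ST n) (t⁻¹ * w) ≤ lenT (ST n) (t⁻¹ * v) + lenT (ST n) (v⁻¹ * w) := by
    have := lenT_mul_le (t⁻¹ * v) (v⁻¹ * w)
    simpa [mul_assoc] using this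
  omega

/-! ### vvec and Mv -/

lemma vvec_apply (n : ℕ) (y : Fin n) (z : Fin (n - 1)) :
    vvec n y z = if z.val = y.val then 1 else 0 := by
  unfold vvec
  by_cases h : y.val < n - 1
  · rw [dif_pos h]
    rcases eq_or_ne z ⟨y.val, h⟩ with rfl | hne
    · simp [Pi.single_apply]
    · rw [Pi.single_apply, if_neg hne, if_neg (fun hv => hne (Fin.ext hv))]
  · rw [dif_neg h]
    have hz := z.isLt
    have : z.val ≠ y.val := by omega
    simp [this]

def Mv (n : ℕ) (w : Perm (Fin n)) : Submodule (ZMod 2) (Fin (n - 1) → ZMod 2) :=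
  Submodule.span (ZMod 2) (Set.range fun a => vvec n a + vvec n (w a))

lemma addv_self (x : Fin (n - 1) → ZMod 2) : x + x = 0 := by
  funext i
  exact CharTwo.add_self_eq_zero _

lemma addv_cancel (x y z : Fin (n - 1) → ZMod 2) : (x + y) + (y + z) = x + z := by
  have h : (x + y) + (y + z) = x + (y + y) + z := by abel
  rw [h, addv_self, add_zero]

lemma gen_mem_Mv (w : Perm (Fin n)) (a : Fin n) : vvec n a + vvec n (w a) ∈ Mv n w :=
  Submodule.subset_span ⟨a, rfl⟩

lemma Mv_mul_le (u v : Perm (Fin n)) : Mv n (u * v) ≤ Mv n u ⊔ Mv n v := by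
  refine Submodule.span_le.mpr ?_
  rintro _ ⟨a, rfl⟩
  show vvec n a + vvec n ((u * v) a) ∈ _
  have h : vvec n a + vvec n ((u * v) a) =
      (vvec n a + vvec n (v a)) + (vvec n (v a) + vvec n (u (v a))) := by
    rw [show (u * v) a = u (v a) from rfl]
    exact (addv_cancel _ _ _).symm
  rw [h]
  exact add_mem (Submodule.mem_sup_right (gen_mem_Mv v a))
    (Submodule.mem_sup_left (gen_mem_Mv u (v a)))

lemma Mv_one : Mv n (1 : Perm (Fin n)) = ⊥ := by
  rw [eq_bot_iff]
  refine Submodule.span_le.mpr ?_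
  rintro _ ⟨a, rfl⟩
  show vvec n a + vvec n ((1 : Perm (Fin n)) a) ∈ _
  rw [Equiv.Perm.one_apply, addv_self]
  simp

lemma span_pair_le_Mv {w : Perm (Fin n)} {a : Fin n} :
    Submodule.span (ZMod 2) {vvec n a + vvec n (w a)} ≤ Mv n w :=
  (Submodule.span_singleton_le_iff_mem _ _).mpr (gen_mem_Mv w a)

lemma Mv_swap {i j : Fin n} (hij : i ≠ j) :
    Mv n (Equiv.swap i j) = Submodule.span (ZMod 2) {vvec n i + vvec n j} := by
  apply le_antisymm
  · refine Submodule.span_le.mpr ?_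
    rintro _ ⟨a, rfl⟩
    show vvec n a + vvec n (Equiv.swap i j a) ∈ _
    rcases eq_or_ne a i with rfl | hai
    · rw [Equiv.swap_apply_left]; exact Submodule.subset_span rfl
    rcases eq_or_ne a j with rfl | haj
    · rw [Equiv.swap_apply_right, add_comm]; exact Submodule.subset_span rfl
    · rw [Equiv.swap_apply_of_ne_of_ne hai haj, addv_self]
      exact Submodule.zero_mem _
  · rw [Submodule.span_singleton_le_iff_mem]
    have := gen_mem_Mv (Equiv.swap i j) i
    rwa [Equiv.swap_apply_left] at this

lemma pairvec_ne_zero {i j : Fin n} (hij : i ≠ j) : vvec n i + vvec n j ≠ 0 := by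
  intro h
  have hij' : i.val ≠ j.val := fun hv => hij (Fin.ext hv)
  have hi := i.isLt
  have hj := j.isLt
  rcases lt_or_ge i.val (n - 1) with h1 | h1
  · have h2 := congrFun h ⟨i.val, h1⟩
    rw [Pi.add_apply, vvec_apply, vvec_apply, if_pos rfl, if_neg hij'] at h2
    simpa using h2
  · have h1' : j.val < n - 1 := by omega
    have h2 := congrFun h ⟨j.val, h1'⟩
    rw [Pi.add_apply, vvec_apply, vvec_apply, if_pos rfl, if_neg (Ne.symm hij')] at h2
    simpa using h2

lemma pairvec_coord {a b : Fin n} (h : a.val < n - 1) (hab : a ≠ b) :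
    (vvec n a + vvec n b) ⟨a.val, h⟩ = 1 := by
  rw [Pi.add_apply, vvec_apply, vvec_apply, if_pos rfl,
    if_neg (fun hv => hab (Fin.ext hv)), add_zero]

lemma finrank_Mv_le_length (l : List (Perm (Fin n))) (hl : ∀ t ∈ l, t ∈ ST n) :
    finrank (ZMod 2) (Mv n l.prod) ≤ l.length := by
  induction l with
  | nil =>
    have h0 : Mv n ([] : List (Perm (Fin n))).prod = ⊥ := Mv_one
    rw [h0]; simp
  | cons t l ih =>
    have h1 : Mv n ((t :: l).prod) ≤ Mv n t ⊔ Mv n l.prod := by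
      rw [List.prod_cons]; exact Mv_mul_le t l.prod
    have h2 : finrank (ZMod 2) (Mv n t) ≤ 1 := by
      obtain ⟨i, j, hij, rfl⟩ := hl t List.mem_cons_self
      rw [Mv_swap hij, finrank_span_singleton (pairvec_ne_zero hij)]
    have h3 := Submodule.finrank_sup_add_finrank_inf_eq (Mv n t) (Mv n l.prod)
    have h4 := Submodule.finrank_mono h1
    have h5 := ih (fun s hs => hl s (List.mem_cons_of_mem t hs))
    simp only [List.length_cons]
    omega

lemma finrank_Mv_le_lenT (w : Perm (Fin n)) :
    finrank (ZMod 2) (Mv n w) ≤ lenT (ST n) w := by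
  obtain ⟨l, a, b, c⟩ := lenT_spec w
  rw [← b, ← c]
  exact finrank_Mv_le_length l a

lemma Mv_split (w : Perm (Fin n)) (a : Fin n) :
    Mv n w = Mv n (Equiv.swap a (w a) * w) ⊔
      Submodule.span (ZMod 2) {vvec n a + vvec n (w a)} := by
  set t := Equiv.swap a (w a) with ht
  set w' := t * w with hw'
  have key : ∀ y, vvec n (w y) + vvec n (w' y) ∈
      Submodule.span (ZMod 2) {vvec n a + vvec n (w a)} := by
    intro y
    show vvec n (w y) + vvec n (t (w y)) ∈ _
    rcases eq_or_ne (w y) a with h | h1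
    · rw [h, Equiv.swap_apply_left]; exact Submodule.subset_span rfl
    rcases eq_or_ne (w y) (w a) with h | h2
    · rw [h, Equiv.swap_apply_right, add_comm]; exact Submodule.subset_span rfl
    · rw [Equiv.swap_apply_of_ne_of_ne h1 h2, addv_self]; exact Submodule.zero_mem _
  apply le_antisymm
  · refine Submodule.span_le.mpr ?_
    rintro _ ⟨y, rfl⟩
    show vvec n y + vvec n (w y) ∈ _
    have h : vvec n y + vvec n (w y) =
        (vvec n y + vvec n (w' y)) + (vvec n (w' y) + vvec n (w y)) := (addv_cancel _ _ _).symm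
    rw [h]
    refine add_mem (Submodule.mem_sup_left (gen_mem_Mv w' y)) (Submodule.mem_sup_right ?_)
    have := key y
    rwa [show vvec n (w y) + vvec n (w' y) = vvec n (w' y) + vvec n (w y) from add_comm _ _] at this
  · apply sup_le
    · refine Submodule.span_le.mpr ?_
      rintro _ ⟨y, rfl⟩
      show vvec n y + vvec n (w' y) ∈ _
      have h : vvec n y + vvec n (w' y) =
          (vvec n y + vvec n (w y)) + (vvec n (w y) + vvec n (w' y)) := (addv_cancel _ _ _).symm
      rw [h]
      exact add_mem (gen_mem_Mv w y) (span_pair_le_Mv (key y))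
    · exact span_pair_le_Mv

lemma Mv_coord_zero {w' : Perm (Fin n)} {a : Fin n} (h : a.val < n - 1) (hfix : w' a = a) :
    ∀ x ∈ Mv n w', x ⟨a.val, h⟩ = 0 := by
  intro x hx
  set za : Fin (n - 1) := ⟨a.val, h⟩ with hza
  have hker : Mv n w' ≤ LinearMap.ker
      (LinearMap.proj za : (Fin (n - 1) → ZMod 2) →ₗ[ZMod 2] ZMod 2) := by
    refine Submodule.span_le.mpr ?_
    rintro _ ⟨y, rfl⟩
    show vvec n y + vvec n (w' y) ∈ _
    simp only [SetLike.mem_coe, LinearMap.mem_ker, LinearMap.proj_apply, Pi.add_apply]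
    rcases eq_or_ne y a with rfl | hy
    · rw [hfix, ← Pi.add_apply]
      rw [addv_self]
      rfl
    · have h1 : za.val ≠ y.val := fun hv => hy (Fin.ext hv.symm)
      have h2 : za.val ≠ (w' y).val := by
        intro hv
        have hwy : w' y = a := Fin.ext hv.symm
        exact hy (w'.injective (hwy.trans hfix.symm))
      rw [vvec_apply, vvec_apply, if_neg h1, if_neg h2, add_zero]
  exact LinearMap.mem_ker.mp (hker hx)

lemma finrank_Mv_succ {w : Perm (Fin n)} {a : Fin n} (h : a.val < n - 1) (ha : w a ≠ a) :
    finrank (ZMod 2) (Mv n w) =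
      finrank (ZMod 2) (Mv n (Equiv.swap a (w a) * w)) + 1 := by
  set w' := Equiv.swap a (w a) * w with hw'
  set L := Submodule.span (ZMod 2) {vvec n a + vvec n (w a)} with hL
  have hsplit : Mv n w = Mv n w' ⊔ L := Mv_split w a
  have hLrank : finrank (ZMod 2) L = 1 := finrank_span_singleton (pairvec_ne_zero (Ne.symm ha))
  have hw'a : w' a = a := by
    rw [hw']
    show Equiv.swap a (w a) (w a) = a
    rw [Equiv.swap_apply_right]
  have hdisj : Mv n w' ⊓ L = ⊥ := by
    rw [eq_bot_iff]
    rintro x ⟨hx1, hx2⟩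
    obtain ⟨c, rfl⟩ := Submodule.mem_span_singleton.mp hx2
    have hc : c = 0 ∨ c = 1 := by
      have : ∀ d : ZMod 2, d = 0 ∨ d = 1 := by decide
      exact this c
    rcases hc with rfl | rfl
    · simp
    · exfalso
      rw [one_smul] at hx1
      have h1 := Mv_coord_zero h hw'a _ hx1
      rw [pairvec_coord h (Ne.symm ha)] at h1
      exact one_ne_zero h1
  have h3 := Submodule.finrank_sup_add_finrank_inf_eq (Mv n w') L
  rw [hdisj, finrank_bot, ← hsplit] at h3
  omega

lemma support_step {w : Perm (Fin n)} {a : Fin n} (ha : w a ≠ a) :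
    (Equiv.swap a (w a) * w).support ⊆ w.support.erase a := by
  intro y hy
  rw [Equiv.Perm.mem_support] at hy
  rw [Finset.mem_erase]
  have hw'a : (Equiv.swap a (w a) * w) a = a := by
    show Equiv.swap a (w a) (w a) = a
    rw [Equiv.swap_apply_right]
  have hya : y ≠ a := by rintro rfl; exact hy hw'a
  refine ⟨hya, Equiv.Perm.mem_support.mpr ?_⟩
  intro hfix
  apply hy
  have hywa : y ≠ w a := fun h => hya (w.injective (hfix.trans h))
  show Equiv.swap a (w a) (w y) = y
  rw [hfix, Equiv.swap_apply_of_ne_of_ne hya hywa]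

lemma lenT_le_finrank_Mv : ∀ (N : ℕ) (w : Perm (Fin n)), w.support.card ≤ N →
    lenT (ST n) w ≤ finrank (ZMod 2) (Mv n w) := by
  intro N
  induction N with
  | zero =>
    intro w hw
    have hw1 : w = 1 := by rwa [Nat.le_zero, Equiv.Perm.card_support_eq_zero] at hw
    subst hw1
    simp [lenT_one]
  | succ N ih =>
    intro w hw
    rcases eq_or_ne w 1 with rfl | hne
    · simp [lenT_one]
    obtain ⟨a, ha, haval⟩ : ∃ a : Fin n, w a ≠ a ∧ a.val < n - 1 := by
      have h2 : 1 < w.support.card := Equiv.Perm.one_lt_card_support_of_ne_one hne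
      obtain ⟨x, hx, y, hy', hxy⟩ := Finset.one_lt_card.mp h2
      have hxv := x.isLt
      have hyv := y.isLt
      have hne2 : x.val ≠ y.val := fun hv => hxy (Fin.ext hv)
      rcases lt_or_ge x.val (n - 1) with h | h
      · exact ⟨x, Equiv.Perm.mem_support.mp hx, h⟩
      · exact ⟨y, Equiv.Perm.mem_support.mp hy', by omega⟩
    set w' := Equiv.swap a (w a) * w with hw'
    have hcard : w'.support.card ≤ N := by
      have h1 := Finset.card_le_card (support_step ha)
      rw [← hw'] at h1
      have h2 : (w.support.erase a).card < w.support.card :=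
        Finset.card_erase_lt_of_mem (Equiv.Perm.mem_support.mpr ha)
      omega
    have hstep := ih w' hcard
    have hfr := finrank_Mv_succ haval ha
    rw [← hw'] at hfr
    have hlen : lenT (ST n) w ≤ 1 + lenT (ST n) w' := by
      have hww : w = Equiv.swap a (w a) * w' := by
        rw [hw', ← mul_assoc, Equiv.swap_mul_self, one_mul]
      calc lenT (ST n) w = lenT (ST n) (Equiv.swap a (w a) * w') := by rw [← hww]
        _ ≤ lenT (ST n) (Equiv.swap a (w a)) + lenT (ST n) w' := lenT_mul_le _ _
        _ = 1 + lenT (ST n) w' := by rw [lenT_swap ⟨a, w a, Ne.symm ha, rfl⟩]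
    omega

lemma lenT_eq_finrank_Mv (w : Perm (Fin n)) :
    lenT (ST n) w = finrank (ZMod 2) (Mv n w) :=
  le_antisymm (lenT_le_finrank_Mv w.support.card w le_rfl) (finrank_Mv_le_lenT w)

lemma lenT_step (hn : 2 ≤ n) {w : Perm (Fin n)} {a : Fin n} (ha : w a ≠ a) :
    lenT (ST n) w = lenT (ST n) (Equiv.swap a (w a) * w) + 1 := by
  rcases lt_or_ge a.val (n - 1) with h | h
  · rw [lenT_eq_finrank_Mv, lenT_eq_finrank_Mv]
    exact finrank_Mv_succ h ha
  · have h0 : (0 : ℕ) < n := by omega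
    set z : Fin n := ⟨0, h0⟩ with hz
    have hza : z ≠ a := by
      intro hzz
      have := congrArg Fin.val hzz
      simp only [hz] at this
      omega
    set g := Equiv.swap a z with hg
    set w2 := g * w * g⁻¹ with hw2
    have hga : g a = z := Equiv.swap_apply_left a z
    have hval : (g a).val < n - 1 := by rw [hga]; show (0 : ℕ) < n - 1; omega
    have happ : ∀ y, w2 y = g (w (g⁻¹ y)) := fun y => rfl
    have hw2ga : w2 (g a) = g (w a) := by rw [happ, ← Equiv.Perm.mul_apply g⁻¹ g a, inv_mul_cancel, Equiv.Perm.one_apply]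
    have hmove : w2 (g a) ≠ g a := by
      rw [hw2ga]
      exact fun hh => ha (g.injective hh)
    have key := finrank_Mv_succ hval hmove
    rw [← lenT_eq_finrank_Mv, ← lenT_eq_finrank_Mv] at key
    have hconj : Equiv.swap (g a) (w2 (g a)) * w2 = g * (Equiv.swap a (w a) * w) * g⁻¹ := by
      rw [hw2ga, Equiv.swap_apply_apply, hw2]
      group
    rw [hconj, lenT_conj, lenT_conj] at key
    exact key

lemma swap_absLe (hn : 2 ≤ n) {w : Perm (Fin n)} {a : Fin n} (ha : w a ≠ a) :
    absLe (ST n) (Equiv.swap a (w a)) w := by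
  unfold absLe
  rw [lenT_swap ⟨a, w a, Ne.symm ha, rfl⟩, Equiv.swap_inv]
  have := lenT_step hn ha
  omega

lemma Mv_swap_le_of_absLe {i j : Fin n} (hij : i ≠ j) {w : Perm (Fin n)}
    (h : absLe (ST n) (Equiv.swap i j) w) : Mv n (Equiv.swap i j) ≤ Mv n w := by
  set t := Equiv.swap i j with ht
  have hlen : lenT (ST n) w = 1 + lenT (ST n) (t * w) := by
    unfold absLe at h
    rw [lenT_swap ⟨i, j, hij, rfl⟩] at h
    rw [h, ht, Equiv.swap_inv]
  have hcov : Mv n w ≤ Mv n t ⊔ Mv n (t * w) := by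
    have hww : w = t * (t * w) := by rw [← mul_assoc, ht, Equiv.swap_mul_self, one_mul]
    conv_lhs => rw [hww]
    exact Mv_mul_le t (t * w)
  have hrank : finrank (ZMod 2) ((Mv n t ⊔ Mv n (t * w)) :
      Submodule (ZMod 2) (Fin (n - 1) → ZMod 2)) ≤ finrank (ZMod 2) (Mv n w) := by
    have h1 := Submodule.finrank_sup_add_finrank_inf_eq (Mv n t) (Mv n (t * w))
    have h2 : finrank (ZMod 2) (Mv n t) ≤ 1 := by
      rw [ht, Mv_swap hij, finrank_span_singleton (pairvec_ne_zero hij)]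
    have h3 := (lenT_eq_finrank_Mv (t * w)).symm
    have h4 := (lenT_eq_finrank_Mv w).symm
    omega
  have heq := Submodule.eq_of_le_of_finrank_le hcov hrank
  exact le_sup_left.trans_eq heq.symm

lemma FA_eq_Mv (hn : 2 ≤ n) (w : Perm (Fin n)) : FA n w = Mv n w := by
  apply le_antisymm
  · apply sSup_le
    rintro L ⟨t, ⟨i, j, hij, rfl, rfl⟩, hle⟩
    rw [← Mv_swap hij]
    exact Mv_swap_le_of_absLe hij hle
  · refine Submodule.span_le.mpr ?_
    rintro _ ⟨a, rfl⟩
    show vvec n a + vvec n (w a) ∈ _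
    rcases eq_or_ne (w a) a with hfix | ha
    · rw [hfix, addv_self]
      exact Submodule.zero_mem _
    · have hmem : vvec n a + vvec n (w a) ∈
          Submodule.span (ZMod 2) {vvec n a + vvec n (w a)} :=
        Submodule.subset_span (Set.mem_singleton _)
      have hL : Submodule.span (ZMod 2) {vvec n a + vvec n (w a)} ≤ FA n w :=
        le_sSup ⟨Equiv.swap a (w a), ⟨a, w a, Ne.symm ha, rfl, rfl⟩, swap_absLe hn ha⟩
      exact hL hmem

end NCPaper
end Lemmas

section Lemmas2
namespace NCPaper

open Equiv Equiv.Perm Submodule Module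

variable {n : ℕ}

lemma pow_pair_mem (w : Perm (Fin n)) (a : Fin n) :
    ∀ i : ℕ, vvec n a + vvec n ((w ^ i) a) ∈ Mv n w := by
  intro i
  induction i with
  | zero =>
    rw [pow_zero, Equiv.Perm.one_apply, addv_self]
    exact Submodule.zero_mem _
  | succ i ih =>
    have h : vvec n a + vvec n ((w ^ (i + 1)) a) =
        (vvec n a + vvec n ((w ^ i) a)) + (vvec n ((w ^ i) a) + vvec n (w ((w ^ i) a))) := by
      rw [pow_succ', Equiv.Perm.mul_apply]
      exact (addv_cancel _ _ _).symm
    rw [h]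
    exact add_mem ih (gen_mem_Mv w _)

lemma pair_mem_Mv_of_sameCycle {w : Perm (Fin n)} {a b : Fin n} (h : w.SameCycle a b) :
    vvec n a + vvec n b ∈ Mv n w := by
  obtain ⟨i, -, rfl⟩ := h.exists_pow_eq'
  exact pow_pair_mem w a i

open Classical in
noncomputable def cycFun (w : Perm (Fin n)) (a : Fin n) :
    (Fin (n - 1) → ZMod 2) →ₗ[ZMod 2] ZMod 2 :=
  ∑ z : Fin (n - 1), if w.SameCycle a (Fin.castLE (Nat.sub_le n 1) z) then LinearMap.proj z else 0

open Classical in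
lemma cycFun_vvec {w : Perm (Fin n)} {a : Fin n}
    (hlast : ∀ h : n - 1 < n, ¬ w.SameCycle a ⟨n - 1, h⟩) (y : Fin n) :
    cycFun w a (vvec n y) = if w.SameCycle a y then 1 else 0 := by
  by_cases hy : y.val < n - 1
  · rw [cycFun, LinearMap.sum_apply]
    rw [Finset.sum_eq_single (⟨y.val, hy⟩ : Fin (n - 1))]
    · have hcast : Fin.castLE (Nat.sub_le n 1) (⟨y.val, hy⟩ : Fin (n - 1)) = y := Fin.ext rfl
      rw [hcast]
      by_cases hc : w.SameCycle a y
      · rw [if_pos hc, if_pos hc, LinearMap.proj_apply, vvec_apply, if_pos rfl]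
      · rw [if_neg hc, if_neg hc, LinearMap.zero_apply]
    · intro z _ hz
      by_cases hc : w.SameCycle a (Fin.castLE (Nat.sub_le n 1) z)
      · rw [if_pos hc, LinearMap.proj_apply, vvec_apply, if_neg (fun hv => hz (Fin.ext hv))]
      · rw [if_neg hc, LinearMap.zero_apply]
    · intro hmem; exact absurd (Finset.mem_univ _) hmem
  · have hyval : y.val = n - 1 := by have := y.isLt; omega
    have h0 : vvec n y = 0 := dif_neg hy
    have hy' : ¬ w.SameCycle a y := by
      have hn1 : n - 1 < n := by have := y.isLt; omega
      have hyy : y = ⟨n - 1, hn1⟩ := Fin.ext hyval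
      rw [hyy]; exact hlast hn1
    rw [h0, map_zero, if_neg hy']

lemma pair_not_mem_aux {w : Perm (Fin n)} {a b : Fin n}
    (hlast : ∀ h : n - 1 < n, ¬ w.SameCycle a ⟨n - 1, h⟩) (hab : ¬ w.SameCycle a b) :
    vvec n a + vvec n b ∉ Mv n w := by
  intro hmem
  have hker : Mv n w ≤ LinearMap.ker (cycFun w a) := by
    refine Submodule.span_le.mpr ?_
    rintro _ ⟨y, rfl⟩
    show vvec n y + vvec n (w y) ∈ _
    rw [SetLike.mem_coe, LinearMap.mem_ker, map_add, cycFun_vvec hlast, cycFun_vvec hlast]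
    have hiff : w.SameCycle a (w y) ↔ w.SameCycle a y := Equiv.Perm.sameCycle_apply_right
    by_cases hc : w.SameCycle a y
    · rw [if_pos hc, if_pos (hiff.mpr hc)]; decide
    · rw [if_neg hc, if_neg (fun h => hc (hiff.mp h)), add_zero]
  have h1 := LinearMap.mem_ker.mp (hker hmem)
  rw [map_add, cycFun_vvec hlast, cycFun_vvec hlast, if_pos (Equiv.Perm.SameCycle.refl w a),
    if_neg hab, add_zero] at h1
  exact one_ne_zero h1

lemma pair_mem_Mv_iff (hn : 2 ≤ n) {w : Perm (Fin n)} {a b : Fin n} :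
    vvec n a + vvec n b ∈ Mv n w ↔ w.SameCycle a b := by
  constructor
  · intro h
    by_contra hs
    by_cases hl : w.SameCycle a ⟨n - 1, by omega⟩
    · have hbl : ∀ hy : n - 1 < n, ¬ w.SameCycle b ⟨n - 1, hy⟩ := by
        intro hy hc
        exact hs (hl.trans hc.symm)
      exact pair_not_mem_aux hbl (fun h' => hs h'.symm) (by rwa [add_comm] at h)
    · exact pair_not_mem_aux (fun _ => hl) hs h
  · exact pair_mem_Mv_of_sameCycle

lemma pow_fixed {w : Perm (Fin n)} {a : Fin n} (hfix : w a = a) : ∀ i : ℕ, (w ^ i) a = a := by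
  intro i
  induction i with
  | zero => simp
  | succ i ih => rw [pow_succ', Equiv.Perm.mul_apply, ih, hfix]

lemma sameCycle_fixed {w : Perm (Fin n)} {a y : Fin n} (hfix : w a = a) (h : w.SameCycle a y) :
    y = a := by
  obtain ⟨i, -, rfl⟩ := h.exists_pow_eq'
  exact pow_fixed hfix i

lemma sameCycle_step {f : Perm (Fin n)} {p q : Fin n} (h : f.SameCycle p q) :
    f.SameCycle p (f q) :=
  Equiv.Perm.sameCycle_apply_right.mpr h

lemma sameCycle_excise {w : Perm (Fin n)} {y p q : Fin n} (hmove : w y ≠ y)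
    (hp : p ≠ y) (hq : q ≠ y) (h : w.SameCycle p q) :
    (Equiv.swap y (w y) * w).SameCycle p q := by
  set w' := Equiv.swap y (w y) * w with hw'
  have hstep : ∀ s : Fin n, s ≠ y → (w s ≠ y ∧ w' s = w s) ∨ (w s = y ∧ w' s = w y) := by
    intro s hs
    rcases eq_or_ne (w s) y with h1 | h1
    · right
      refine ⟨h1, ?_⟩
      show Equiv.swap y (w y) (w s) = w y
      rw [h1, Equiv.swap_apply_left]
    · left
      refine ⟨h1, ?_⟩
      show Equiv.swap y (w y) (w s) = w s
      have h2 : w s ≠ w y := fun hh => hs (w.injective hh)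
      rw [Equiv.swap_apply_of_ne_of_ne h1 h2]
  have key : ∀ i : ℕ,
      ((w ^ i) p ≠ y → w'.SameCycle p ((w ^ i) p)) ∧
      ((w ^ i) p = y → w'.SameCycle p ((w ^ (i + 1)) p)) := by
    intro i
    induction i with
    | zero =>
      constructor
      · intro _; exact ⟨0, by simp⟩
      · intro h0
        rw [pow_zero, Equiv.Perm.one_apply] at h0
        exact absurd h0 hp
    | succ i ih =>
      have happ : (w ^ (i + 1)) p = w ((w ^ i) p) := by rw [pow_succ', Equiv.Perm.mul_apply]
      have happ2 : (w ^ (i + 1 + 1)) p = w ((w ^ (i + 1)) p) := by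
        rw [pow_succ', Equiv.Perm.mul_apply]
      rcases eq_or_ne ((w ^ i) p) y with hcy | hcy
      · -- previous entry is y : use second part of ih
        have h2 := ih.2 hcy
        constructor
        · intro _; exact h2
        · intro heq
          rw [happ, hcy] at heq
          exact absurd heq hmove
      · have h1 := ih.1 hcy
        rcases hstep _ hcy with ⟨hne, hs⟩ | ⟨hs1, hs2⟩
        · constructor
          · intro _
            have h2 := sameCycle_step h1
            rwa [hs, ← happ] at h2
          · intro heq
            rw [happ] at heq
            exact absurd heq hne
        · constructor
          · intro hne2
            rw [happ] at hne2
            exact absurd hs1 hne2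
          · intro _
            have h2 := sameCycle_step h1
            rw [hs2] at h2
            rwa [happ2, happ, hs1]
  obtain ⟨i, -, hi⟩ := h.exists_pow_eq'
  have := (key i).1 (by rw [hi]; exact hq)
  rwa [hi] at this

end NCPaper
end Lemmas2

section Lemmas3
namespace NCPaper

open Equiv Equiv.Perm Submodule Module
open Fin.NatCast
open Fin.CommRing

variable {n : ℕ} [NeZero n]

lemma finRotate_apply_eq (hn : 2 ≤ n) (y : Fin n) : finRotate n y = y + 1 := by
  obtain ⟨m, rfl⟩ : ∃ m, n = m + 1 := ⟨n - 1, by omega⟩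
  exact finRotate_succ_apply y

lemma natCast_fin_inj {s t : ℕ} (hs : s < n) (ht : t < n) (h : (s : Fin n) = t) : s = t := by
  have h2 := congrArg Fin.val h
  rw [Fin.val_cast_of_lt hs, Fin.val_cast_of_lt ht] at h2
  exact h2

lemma add_natCast_inj {a : Fin n} {s t : ℕ} (hs : s < n) (ht : t < n)
    (h : a + (s : Fin n) = a + (t : Fin n)) : s = t :=
  natCast_fin_inj hs ht (add_left_cancel h)

lemma add_natCast_ne {a : Fin n} {s : ℕ} (h0 : 0 < s) (hs : s < n) : a + (s : Fin n) ≠ a := by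
  intro h
  have h2 : a + (s : Fin n) = a + ((0 : ℕ) : Fin n) := by rw [Nat.cast_zero, add_zero, h]
  have := add_natCast_inj hs (by omega) h2
  omega

lemma finRotate_pow_apply (hn : 2 ≤ n) (j : ℕ) (y : Fin n) :
    ((finRotate n) ^ j) y = y + (j : Fin n) := by
  induction j with
  | zero => simp
  | succ j ih =>
    rw [pow_succ', Equiv.Perm.mul_apply, ih, finRotate_apply_eq hn]
    push_cast
    ring

lemma sameCycle_finRotate (hn : 2 ≤ n) (y z : Fin n) : (finRotate n).SameCycle y z := by
  refine ⟨((z - y).val : ℤ), ?_⟩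
  rw [zpow_natCast, finRotate_pow_apply hn, Fin.cast_val_eq_self]
  ring

lemma vvec_castLE (z : Fin (n - 1)) :
    vvec n (Fin.castLE (Nat.sub_le n 1) z) = Pi.single z (1 : ZMod 2) := by
  have hz : (Fin.castLE (Nat.sub_le n 1) z).val < n - 1 := z.isLt
  rw [vvec, dif_pos hz]
  congr 1

lemma Mv_eq_top_of_cycle (hn : 2 ≤ n) {w : Perm (Fin n)} (h : ∀ y z : Fin n, w.SameCycle y z) :
    Mv n w = ⊤ := by
  rw [eq_top_iff]
  intro x _
  have hx : x = ∑ z : Fin (n - 1), x z • Pi.single z (1 : ZMod 2) := by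
    funext j
    rw [Finset.sum_apply, Finset.sum_eq_single j]
    · rw [Pi.smul_apply, Pi.single_eq_same, smul_eq_mul, mul_one]
    · intro z _ hz
      rw [Pi.smul_apply, Pi.single_eq_of_ne (Ne.symm hz), smul_zero]
    · intro hj; exact absurd (Finset.mem_univ _) hj
  rw [hx]
  refine Submodule.sum_mem _ (fun z _ => Submodule.smul_mem _ _ ?_)
  have hlt : n - 1 < n := by omega
  have hpair := pair_mem_Mv_of_sameCycle (h (Fin.castLE (Nat.sub_le n 1) z) ⟨n - 1, hlt⟩)
  have hl0 : vvec n (⟨n - 1, hlt⟩ : Fin n) = 0 := dif_neg (lt_irrefl _)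
  rw [hl0, add_zero, vvec_castLE] at hpair
  exact hpair

lemma lenT_of_cycle (hn : 2 ≤ n) {w : Perm (Fin n)} (h : ∀ y z : Fin n, w.SameCycle y z) :
    lenT (ST n) w = n - 1 := by
  rw [lenT_eq_finrank_Mv, Mv_eq_top_of_cycle hn h, finrank_top, Module.finrank_fin_fun]

lemma three_cycle_not_le (hn : 2 ≤ n) (a : Fin n) (k m : ℕ) (hk : 0 < k) (hkm : k < m)
    (hmn : m < n)
    (habs : absLe (ST n)
      (Equiv.swap a (a + (k : Fin n)) * Equiv.swap a (a + (m : Fin n))) (finRotate n)) :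
    False := by
  have hkn : k < n := by omega
  have hxa : a + (k : Fin n) ≠ a := add_natCast_ne hk hkn
  have hba : a + (m : Fin n) ≠ a := add_natCast_ne (by omega) hmn
  have hxb : a + (k : Fin n) ≠ a + (m : Fin n) := by
    intro h
    have := add_natCast_inj hkn hmn h
    omega
  set x := a + (k : Fin n) with hxdef
  set b := a + (m : Fin n) with hbdef
  set w : Perm (Fin n) := Equiv.swap a x * Equiv.swap a b with hwdef
  set u : Perm (Fin n) := w⁻¹ * finRotate n with hudef
  have hwinv : w⁻¹ = Equiv.swap a b * Equiv.swap a x := by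
    rw [hwdef, mul_inv_rev, Equiv.swap_inv, Equiv.swap_inv]
  have hia : w⁻¹ a = x := by
    rw [hwinv, Equiv.Perm.mul_apply, Equiv.swap_apply_left,
      Equiv.swap_apply_of_ne_of_ne hxa hxb]
  have hix : w⁻¹ x = b := by
    rw [hwinv, Equiv.Perm.mul_apply, Equiv.swap_apply_right, Equiv.swap_apply_left]
  have hib : w⁻¹ b = a := by
    rw [hwinv, Equiv.Perm.mul_apply,
      Equiv.swap_apply_of_ne_of_ne hba (Ne.symm hxb), Equiv.swap_apply_right]
  have hifix : ∀ y : Fin n, y ≠ a → y ≠ x → y ≠ b → w⁻¹ y = y := by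
    intro y h1 h2 h3
    rw [hwinv, Equiv.Perm.mul_apply, Equiv.swap_apply_of_ne_of_ne h1 h2,
      Equiv.swap_apply_of_ne_of_ne h1 h3]
  have hwa : w a = b := by
    rw [hwdef, Equiv.Perm.mul_apply, Equiv.swap_apply_left,
      Equiv.swap_apply_of_ne_of_ne hba (Ne.symm hxb)]
  -- the u-orbit chain
  have hcast : ∀ j : ℕ, a + (j : Fin n) + 1 = a + ((j + 1 : ℕ) : Fin n) := by
    intro j
    push_cast
    ring
  have hcapp : ∀ y : Fin n, u y = w⁻¹ (y + 1) := by
    intro y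
    rw [hudef, Equiv.Perm.mul_apply, finRotate_apply_eq hn]
  have ustep : ∀ j : ℕ, j + 1 < n → j + 1 ≠ k → j + 1 ≠ m →
      u (a + (j : Fin n)) = a + ((j + 1 : ℕ) : Fin n) := by
    intro j h1 h2 h3
    rw [hcapp, hcast]
    apply hifix
    · exact add_natCast_ne (by omega) h1
    · intro h
      exact h2 (add_natCast_inj h1 hkn h)
    · intro h
      exact h3 (add_natCast_inj h1 hmn h)
  have ujump1 : u (a + ((k - 1 : ℕ) : Fin n)) = b := by
    rw [hcapp, hcast, show k - 1 + 1 = k by omega, ← hxdef, hix]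
  have ujump2 : u (a + ((n - 1 : ℕ) : Fin n)) = x := by
    rw [hcapp, hcast, show n - 1 + 1 = n by omega, Fin.natCast_self, add_zero, hia]
  have useg1 : ∀ j : ℕ, j < k → u.SameCycle a (a + (j : Fin n)) := by
    intro j
    induction j with
    | zero => intro _; rw [Nat.cast_zero, add_zero]
    | succ j ihj =>
      intro hj
      have h1 := ihj (by omega)
      have h2 := ustep j (by omega) (by omega) (by omega)
      have h3 := sameCycle_step h1
      rwa [h2] at h3
  have hPm : u.SameCycle a b := by
    have h1 := useg1 (k - 1) (by omega)
    have h3 := sameCycle_step h1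
    rwa [ujump1] at h3
  have useg2 : ∀ j : ℕ, m ≤ j → j < n → u.SameCycle a (a + (j : Fin n)) := by
    intro j hj1
    induction j, hj1 using Nat.le_induction with
    | base => intro _; rw [← hbdef]; exact hPm
    | succ j hj ihj =>
      intro hj2
      have h1 := ihj (by omega)
      have h2 := ustep j (by omega) (by omega) (by omega)
      have h3 := sameCycle_step h1
      rwa [h2] at h3
  have hPk : u.SameCycle a x := by
    have h1 := useg2 (n - 1) (by omega) (by omega)
    have h3 := sameCycle_step h1
    rwa [ujump2] at h3
  have useg3 : ∀ j : ℕ, k ≤ j → j < m → u.SameCycle a (a + (j : Fin n)) := by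
    intro j hj1
    induction j, hj1 using Nat.le_induction with
    | base => intro _; rw [← hxdef]; exact hPk
    | succ j hj ihj =>
      intro hj2
      have h1 := ihj (by omega)
      have h2 := ustep j (by omega) (by omega) (by omega)
      have h3 := sameCycle_step h1
      rwa [h2] at h3
  have hall : ∀ z : Fin n, u.SameCycle a z := by
    intro z
    have hz : a + (((z - a).val : ℕ) : Fin n) = z := by
      rw [Fin.cast_val_eq_self]
      ring
    have hjn : (z - a).val < n := (z - a).isLt
    rw [← hz]
    rcases lt_or_ge (z - a).val k with h | h
    · exact useg1 _ h
    · rcases lt_or_ge (z - a).val m with h2 | h2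
      · exact useg3 _ h h2
      · exact useg2 _ h2 hjn
  have hu2 : ∀ y z : Fin n, u.SameCycle y z := fun y z => (hall y).symm.trans (hall z)
  have hlu : lenT (ST n) u = n - 1 := lenT_of_cycle hn hu2
  have hlc : lenT (ST n) (finRotate n) = n - 1 := lenT_of_cycle hn (sameCycle_finRotate hn)
  have hlw : lenT (ST n) w = 0 := by
    unfold absLe at habs
    rw [hlc, ← hudef, hlu] at habs
    omega
  have hw1 : w = 1 := lenT_eq_zero_iff.mp hlw
  rw [hw1, Equiv.Perm.one_apply] at hwa
  exact hba hwa.symm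

lemma no_cross (hn : 2 ≤ n) : ∀ (N : ℕ) (w : Perm (Fin n)), w.support.card ≤ N →
    absLe (ST n) w (finRotate n) → ∀ (a : Fin n) (k m : ℕ), 0 < k → k < m → m < n →
    w a = a + (m : Fin n) → w.SameCycle a (a + (k : Fin n)) → False := by
  intro N
  induction N with
  | zero =>
    intro w hw hwc a k m hk hkm hmn hwa hsc
    have hw1 : w = 1 := by rwa [Nat.le_zero, Equiv.Perm.card_support_eq_zero] at hw
    rw [hw1, Equiv.Perm.one_apply] at hwa
    exact add_natCast_ne (by omega) hmn hwa.symm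
  | succ N ih =>
    intro w hw hwc a k m hk hkm hmn hwa hsc
    have hkn : k < n := by omega
    have hxa : a + (k : Fin n) ≠ a := add_natCast_ne hk hkn
    have hba : a + (m : Fin n) ≠ a := add_natCast_ne (by omega) hmn
    have hxb : a + (k : Fin n) ≠ a + (m : Fin n) := by
      intro h
      have := add_natCast_inj hkn hmn h
      omega
    by_cases hex : ∃ y, w y ≠ y ∧ y ≠ a ∧ y ≠ (a + (m : Fin n)) ∧ y ≠ (a + (k : Fin n))
    · obtain ⟨y, hy, hya, hyb, hyx⟩ := hex
      have hcard : (Equiv.swap y (w y) * w).support.card ≤ N := by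
        have h1 := Finset.card_le_card (support_step hy)
        have h2 : (w.support.erase y).card < w.support.card :=
          Finset.card_erase_lt_of_mem (Equiv.Perm.mem_support.mpr hy)
        omega
      have hle : absLe (ST n) (Equiv.swap y (w y) * w) w := by
        unfold absLe
        have h1 : (Equiv.swap y (w y) * w)⁻¹ * w = w⁻¹ * Equiv.swap y (w y) * w := by
          rw [mul_inv_rev, Equiv.swap_inv, mul_assoc]
        have h2 : lenT (ST n) (w⁻¹ * Equiv.swap y (w y) * w) = 1 := by
          have h3 := lenT_conj w⁻¹ (Equiv.swap y (w y))
          rw [inv_inv] at h3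
          rw [h3]
          exact lenT_swap ⟨y, w y, Ne.symm hy, rfl⟩
        rw [h1, h2]
        have := lenT_step hn hy
        omega
      have hwc' := absLe_trans hle hwc
      have hwa' : (Equiv.swap y (w y) * w) a = a + (m : Fin n) := by
        show Equiv.swap y (w y) (w a) = _
        rw [hwa]
        apply Equiv.swap_apply_of_ne_of_ne (Ne.symm hyb)
        intro h
        exact hya (w.injective (by rw [hwa, ← h]))
      have hsc' : (Equiv.swap y (w y) * w).SameCycle a (a + (k : Fin n)) :=
        sameCycle_excise hy (Ne.symm hya) (Ne.symm hyx) hsc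
      exact ih _ hcard hwc' a k m hk hkm hmn hwa' hsc'
    · push_neg at hex
      have hwbne : w (a + (m : Fin n)) ≠ a + (m : Fin n) := by
        intro h
        exact hba (w.injective (h.trans hwa.symm))
      rcases eq_or_ne (w (a + (m : Fin n))) a with hwb | hwb
      · -- orbit of a is {a, a+m}, but a+k is in it : contradiction
        have horb : ∀ i : ℕ, (w ^ i) a = a ∨ (w ^ i) a = a + (m : Fin n) := by
          intro i
          induction i with
          | zero => left; simp
          | succ i ihh =>
            have happ : (w ^ (i + 1)) a = w ((w ^ i) a) := by
              rw [pow_succ', Equiv.Perm.mul_apply]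
            rcases ihh with h | h
            · right; rw [happ, h, hwa]
            · left; rw [happ, h, hwb]
        obtain ⟨i, -, hi⟩ := hsc.exists_pow_eq'
        rcases horb i with h | h <;> rw [hi] at h
        · exact hxa h
        · exact hxb h
      · have hwbx : w (a + (m : Fin n)) = a + (k : Fin n) := by
          apply hex
          · intro h
            exact hwbne (w.injective h)
          · exact hwb
          · exact hwbne
        have hwxne : w (a + (k : Fin n)) ≠ a + (k : Fin n) := by
          intro h
          exact hxb (w.injective (h.trans hwbx.symm))
        have hwxb : w (a + (k : Fin n)) ≠ a + (m : Fin n) := by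
          intro h
          exact hxa (w.injective (h.trans hwa.symm))
        have hwx : w (a + (k : Fin n)) = a := by
          by_contra hcon
          have := hex (w (a + (k : Fin n)))
            (fun h => hwxne (w.injective h)) hcon hwxb
          exact hwxne this
        have hweq : w = Equiv.swap a (a + (k : Fin n)) * Equiv.swap a (a + (m : Fin n)) := by
          apply Equiv.ext
          intro y
          rcases eq_or_ne y a with rfl | h1
          · rw [hwa, Equiv.Perm.mul_apply, Equiv.swap_apply_left,
              Equiv.swap_apply_of_ne_of_ne hba (Ne.symm hxb)]
          rcases eq_or_ne y (a + (m : Fin n)) with rfl | h2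
          · rw [hwbx, Equiv.Perm.mul_apply, Equiv.swap_apply_right, Equiv.swap_apply_left]
          rcases eq_or_ne y (a + (k : Fin n)) with rfl | h3
          · rw [hwx, Equiv.Perm.mul_apply, Equiv.swap_apply_of_ne_of_ne hxa hxb,
              Equiv.swap_apply_right]
          · have hfy : w y = y := by
              by_contra hcon
              exact h3 (hex y hcon h1 h2)
            rw [hfy, Equiv.Perm.mul_apply, Equiv.swap_apply_of_ne_of_ne h1 h2,
              Equiv.swap_apply_of_ne_of_ne h1 h3]
        rw [hweq] at hwc
        exact three_cycle_not_le hn a k m hk hkm hmn hwc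

lemma nc_inj (hn : 2 ≤ n) {v w : Perm (Fin n)}
    (hv : absLe (ST n) v (finRotate n)) (hw : absLe (ST n) w (finRotate n))
    (h : Mv n v = Mv n w) : v = w := by
  have hsc : ∀ p q : Fin n, v.SameCycle p q ↔ w.SameCycle p q := by
    intro p q
    rw [← pair_mem_Mv_iff hn, ← pair_mem_Mv_iff hn, h]
  apply Equiv.ext
  intro a
  rcases eq_or_ne (w a) a with hwa | hwa
  · rcases eq_or_ne (v a) a with hva | hva
    · rw [hva, hwa]
    · exfalso
      have h1 : w.SameCycle a (v a) := (hsc a (v a)).mp ⟨1, by simp⟩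
      exact hva (sameCycle_fixed hwa h1)
  · rcases eq_or_ne (v a) a with hva | hva
    · exfalso
      have h1 : v.SameCycle a (w a) := (hsc a (w a)).mpr ⟨1, by simp⟩
      exact hwa (sameCycle_fixed hva h1)
    · have hma : w a = a + (((w a - a).val : ℕ) : Fin n) := by
        rw [Fin.cast_val_eq_self]
        ring
      have hva2 : v a = a + (((v a - a).val : ℕ) : Fin n) := by
        rw [Fin.cast_val_eq_self]
        ring
      have hmwn : (w a - a).val < n := (w a - a).isLt
      have hmvn : (v a - a).val < n := (v a - a).isLt
      have hmw0 : 0 < (w a - a).val := by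
        rcases Nat.eq_zero_or_pos (w a - a).val with h0 | h0
        · exfalso
          rw [h0, Nat.cast_zero, add_zero] at hma
          exact hwa hma
        · exact h0
      have hmv0 : 0 < (v a - a).val := by
        rcases Nat.eq_zero_or_pos (v a - a).val with h0 | h0
        · exfalso
          rw [h0, Nat.cast_zero, add_zero] at hva2
          exact hva hva2
        · exact h0
      have heq : (v a - a).val = (w a - a).val := by
        by_contra hne
        rcases lt_or_gt_of_ne hne with hlt | hgt
        · have h1 : v.SameCycle a (a + (((v a - a).val : ℕ) : Fin n)) := by
            rw [← hva2]
            exact ⟨1, by simp⟩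
          exact no_cross hn w.support.card w le_rfl hw a _ _ hmv0 hlt hmwn hma ((hsc _ _).mp h1)
        · have h1 : w.SameCycle a (a + (((w a - a).val : ℕ) : Fin n)) := by
            rw [← hma]
            exact ⟨1, by simp⟩
          exact no_cross hn v.support.card v le_rfl hv a _ _ hmw0 hgt hmvn hva2 ((hsc _ _).mpr h1)
      rw [hma, hva2, heq]

lemma swap_pow_cases (i j : Fin n) : ∀ p : ℕ,
    (Equiv.swap i j) ^ p = 1 ∨ (Equiv.swap i j) ^ p = Equiv.swap i j := by
  intro p
  induction p with
  | zero => left; rw [pow_zero]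
  | succ p ih =>
    rcases ih with h | h
    · right; rw [pow_succ, h, one_mul]
    · left; rw [pow_succ, h, Equiv.swap_mul_self]

lemma sameCycle_swap {i j kk ll : Fin n} (hij : i ≠ j)
    (h : (Equiv.swap kk ll).SameCycle i j) : Equiv.swap kk ll i = j := by
  obtain ⟨p, -, hp⟩ := h.exists_pow_eq'
  rcases swap_pow_cases kk ll p with h1 | h1 <;> rw [h1] at hp
  · rw [Equiv.Perm.one_apply] at hp
    exact absurd hp hij
  · exact hp

end NCPaper
end Lemmas3

namespace NCPaper

open Equiv Equiv.Perm Submodule Module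

/-- `f'` is injective on transpositions, and `F` is an order-preserving,
rank-preserving, injective map from `NC(S_n)` to the subspace lattice of `𝔽₂^{n-1}`. -/
theorem typeA_building_embedding (n : ℕ) (hn : 2 ≤ n) :
    (∀ t t' L L', lineOfA n t L → lineOfA n t' L' → L = L' → t = t') ∧
    (∀ v ∈ NC (ST n) (finRotate n), ∀ w ∈ NC (ST n) (finRotate n),
       absLe (ST n) v w → FA n v ≤ FA n w) ∧
    (∀ w ∈ NC (ST n) (finRotate n),
       Module.finrank (ZMod 2) (FA n w) = lenT (ST n) w) ∧
    (∀ v ∈ NC (ST n) (finRotate n), ∀ w ∈ NC (ST n) (finRotate n),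
       FA n v = FA n w → v = w) := by
  haveI : NeZero n := ⟨by omega⟩
  refine ⟨?_, ?_, ?_, ?_⟩
  · rintro t t' L L' ⟨i, j, hij, rfl, rfl⟩ ⟨kk, ll, hkl, rfl, rfl⟩ hLL
    have hmem : vvec n i + vvec n j ∈ Mv n (Equiv.swap kk ll) := by
      rw [Mv_swap hkl, ← hLL]
      exact Submodule.subset_span (Set.mem_singleton _)
    have hsc := (pair_mem_Mv_iff hn).mp hmem
    have hswap : Equiv.swap kk ll i = j := sameCycle_swap hij hsc
    rcases eq_or_ne i kk with rfl | hik
    · rw [Equiv.swap_apply_left] at hswap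
      rw [hswap]
    rcases eq_or_ne i ll with rfl | hil
    · rw [Equiv.swap_apply_right] at hswap
      rw [← hswap]
      exact Equiv.swap_comm i kk
    · rw [Equiv.swap_apply_of_ne_of_ne hik hil] at hswap
      exact absurd hswap hij
  · intro v _ w _ h
    apply sSup_le_sSup
    rintro L ⟨t, hline, hlt⟩
    exact ⟨t, hline, absLe_trans hlt h⟩
  · intro w _
    rw [FA_eq_Mv hn]
    exact (lenT_eq_finrank_Mv w).symm
  · intro v hv w hw h
    rw [FA_eq_Mv hn, FA_eq_Mv hn] at h
    exact nc_inj hn hv hw h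

end NCPaper
end

section
/- Let K be a field, m ≥ 2, and V an m-dimensional K-vector space. Let Γ be the simple graph whose vertices are the complete flags V_1 ⊂ V_2 ⊂ ⋯ ⊂ V_{m−1} of linear subspaces of V with dim V_i = i, two distinct flags being adjacent iff they differ in exactly one subspace. Then Γ is connected and every vertex of Γ has eccentricity exactly m(m−1)/2; in particular the diameter and the radius of Γ both equal binom(m,2). -/
namespace NCPaper

/-- A complete flag `V_1 ⊂ V_2 ⊂ ⋯ ⊂ V_{m-1}` of subspaces of an `m`-dimensional
vector space `V`, recorded as the function sending `i : Fin (m-1)` to the subspace of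
dimension `i+1`. -/
def IsCompleteFlagOf (K : Type*) [Field K] {V : Type*} [AddCommGroup V] [Module K V]
    (m : ℕ) (fl : Fin (m-1) → Submodule K V) : Prop :=
  (∀ i : Fin (m-1), Module.finrank K (fl i) = i.val + 1) ∧
  (∀ i j : Fin (m-1), i ≤ j → fl i ≤ fl j)

/-- The graph whose vertices are the complete flags of `V`, two distinct flags being
adjacent iff they differ in exactly one subspace. -/
def flagGraphOf (K : Type*) [Field K] (V : Type*) [AddCommGroup V] [Module K V]
    (m : ℕ) : SimpleGraph {fl : Fin (m-1) → Submodule K V // IsCompleteFlagOf K m fl} where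
  Adj a b := ∃! i, a.1 i ≠ b.1 i
  symm := by
    constructor
    rintro a b ⟨i, hi, hu⟩
    exact ⟨i, hi.symm, fun j hj => hu j hj.symm⟩
  loopless := by constructor; rintro a ⟨i, hi, _⟩; exact hi rfl

open Module Submodule Finset

section Aux

variable {K : Type*} [Field K] {V : Type*} [AddCommGroup V] [Module K V]

lemma submod_ineq [FiniteDimensional K V] {X Y W W' : Submodule K V}
    (hXY : X ≤ Y) (hWW' : W ≤ W') :
    finrank K ↥(Y ⊓ W) + finrank K ↥(X ⊓ W') ≤
      finrank K ↥(Y ⊓ W') + finrank K ↥(X ⊓ W) := by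
  have h1 : (Y ⊓ W) ⊓ (X ⊓ W') = X ⊓ W := by
    apply le_antisymm
    · exact le_inf (inf_le_right.trans inf_le_left) (inf_le_left.trans inf_le_right)
    · exact le_inf (le_inf (inf_le_left.trans hXY) inf_le_right)
        (le_inf inf_le_left (inf_le_right.trans hWW'))
  have h2 : (Y ⊓ W) ⊔ (X ⊓ W') ≤ Y ⊓ W' :=
    sup_le (le_inf inf_le_left (inf_le_right.trans hWW'))
      (le_inf (inf_le_left.trans hXY) inf_le_right)
  have h3 := Submodule.finrank_sup_add_finrank_inf_eq (Y ⊓ W) (X ⊓ W')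
  have h4 : finrank K ↥((Y ⊓ W) ⊔ (X ⊓ W')) ≤ finrank K ↥(Y ⊓ W') :=
    Submodule.finrank_mono h2
  rw [h1] at h3
  omega

variable {m : ℕ}

/-- extended flag, indexed by `ℕ`, `E fl 0 = ⊥`, `E fl i = fl (i-1)` for `1 ≤ i ≤ m-1`,
`E fl i = ⊤` for `i ≥ m`. -/
def E (m : ℕ) (fl : Fin (m-1) → Submodule K V) (i : ℕ) : Submodule K V :=
  if h : 1 ≤ i ∧ i ≤ m - 1 then fl ⟨i-1, by omega⟩ else if i = 0 then ⊥ else ⊤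

lemma E_zero (fl : Fin (m-1) → Submodule K V) : E m fl 0 = ⊥ := by simp [E]

lemma E_top (fl : Fin (m-1) → Submodule K V) {i : ℕ} (hi : m ≤ i) (hm : 2 ≤ m) :
    E m fl i = ⊤ := by
  have h1 : ¬ (1 ≤ i ∧ i ≤ m - 1) := by omega
  have h2 : i ≠ 0 := by omega
  simp [E, h1, h2]

lemma E_comp (fl : Fin (m-1) → Submodule K V) (t : Fin (m-1)) :
    E m fl (t.val + 1) = fl t := by
  have h : 1 ≤ t.val + 1 ∧ t.val + 1 ≤ m - 1 := ⟨by omega, by omega⟩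
  simp only [E, dif_pos h]
  congr 1

lemma E_mid (fl : Fin (m-1) → Submodule K V) {i : ℕ} (h1 : 1 ≤ i) (h2 : i ≤ m - 1) :
    E m fl i = fl ⟨i - 1, by omega⟩ := by
  simp only [E, dif_pos (⟨h1, h2⟩ : 1 ≤ i ∧ i ≤ m - 1)]

lemma E_mono {fl : Fin (m-1) → Submodule K V} (hfl : IsCompleteFlagOf K m fl) :
    Monotone (E m fl) := by
  intro i j hij
  unfold E
  split_ifs with h1 h2 h2 h3 h3 <;>
    first
      | omega
      | exact hfl.2 _ _ (by simp only [Fin.mk_le_mk]; omega)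
      | exact le_rfl
      | exact le_top
      | exact bot_le

lemma E_finrank [FiniteDimensional K V] (hdim : finrank K V = m)
    {fl : Fin (m-1) → Submodule K V} (hfl : IsCompleteFlagOf K m fl)
    (hm : 2 ≤ m) {i : ℕ} (hi : i ≤ m) :
    finrank K ↥(E m fl i) = i := by
  rcases Nat.eq_zero_or_pos i with h0 | h0
  · subst h0; rw [E_zero]; exact finrank_bot K V
  rcases le_or_gt i (m-1) with h1 | h1
  · rw [E_mid fl h0 h1, hfl.1]
    simp only [Fin.val_mk]
    omega
  · have : i = m := by omega
    subst this
    rw [E_top fl le_rfl hm, finrank_top, hdim]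
end Aux

abbrev Vx (K : Type*) [Field K] (V : Type*) [AddCommGroup V] [Module K V] (m : ℕ) :=
  {fl : Fin (m-1) → Submodule K V // IsCompleteFlagOf K m fl}

section Comb

open Finset

/-- swap of `k` and `k+1` -/
def swp (k x : ℕ) : ℕ := if x = k then k+1 else if x = k+1 then k else x

lemma L_swap {m k : ℕ} {f g f' g' : ℕ → ℕ}
    (hk1 : 1 ≤ k) (hk : k + 1 ≤ m)
    (hfmem : ∀ i, 1 ≤ i → i ≤ m → 1 ≤ f i ∧ f i ≤ m)
    (hgmem : ∀ j, 1 ≤ j → j ≤ m → 1 ≤ g j ∧ g j ≤ m)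
    (hgf : ∀ i, 1 ≤ i → i ≤ m → g (f i) = i)
    (hfg : ∀ j, 1 ≤ j → j ≤ m → f (g j) = j)
    (hg'f' : ∀ i, 1 ≤ i → i ≤ m → g' (f' i) = i)
    (hoff : ∀ i, i ≠ k → i ≠ k + 1 → f' i = f i)
    (hsw1 : f' k = f (k+1)) (hsw2 : f' (k+1) = f k)
    (hlt : f k < f (k+1)) :
    (∑ i ∈ Icc 1 m, ∑ j ∈ Icc 1 m, if j < f' i ∧ i < g' j then 1 else 0)
      = (∑ i ∈ Icc 1 m, ∑ j ∈ Icc 1 m, if j < f i ∧ i < g j then 1 else 0) + 1 := by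
  have hkm : k ∈ Icc 1 m := by simp only [mem_Icc]; omega
  have hk1m : k + 1 ∈ (Icc 1 m).erase k := by
    simp only [mem_erase, mem_Icc]; omega
  have humem := hfmem k (by omega) (by omega)
  have hvmem := hfmem (k+1) (by omega) (by omega)
  have hgu : g (f k) = k := hgf k (by omega) (by omega)
  have hgv : g (f (k+1)) = k + 1 := hgf (k+1) (by omega) (by omega)
  -- g' is swp ∘ g on the interval
  have hg' : ∀ j, 1 ≤ j → j ≤ m → g' j = swp k (g j) := by
    intro j hj1 hjm
    have hgj := hgmem j hj1 hjm
    have hswm : 1 ≤ swp k (g j) ∧ swp k (g j) ≤ m := by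
      unfold swp; split_ifs <;> omega
    have hf' : f' (swp k (g j)) = j := by
      unfold swp
      split_ifs with h1 h2
      · rw [hsw2, ← h1]; exact hfg j hj1 hjm
      · rw [hsw1, ← h2]; exact hfg j hj1 hjm
      · rw [hoff _ h1 h2]; exact hfg j hj1 hjm
    have := hg'f' (swp k (g j)) hswm.1 hswm.2
    rw [hf'] at this
    exact this
  -- classification of g j
  have hclass : ∀ j, 1 ≤ j → j ≤ m → (g j = k ↔ j = f k) ∧ (g j = k + 1 ↔ j = f (k+1)) := by
    intro j hj1 hjm
    constructor
    · constructor
      · intro h; have := hfg j hj1 hjm; rw [h] at this; omega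
      · intro h; rw [h]; exact hgu
    · constructor
      · intro h; have := hfg j hj1 hjm; rw [h] at this; omega
      · intro h; rw [h]; exact hgv
  have hsplit : ∀ F : ℕ → ℕ, ∑ i ∈ Icc 1 m, F i =
      (∑ i ∈ ((Icc 1 m).erase k).erase (k+1), F i) + F (k+1) + F k := by
    intro F
    rw [Finset.sum_erase_add _ _ hk1m, Finset.sum_erase_add _ _ hkm]
  rw [hsplit, hsplit (fun i => ∑ j ∈ Icc 1 m, if j < f i ∧ i < g j then 1 else 0)]
  have hrest : (∑ i ∈ ((Icc 1 m).erase k).erase (k+1),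
        ∑ j ∈ Icc 1 m, if j < f' i ∧ i < g' j then 1 else 0)
      = ∑ i ∈ ((Icc 1 m).erase k).erase (k+1),
        ∑ j ∈ Icc 1 m, if j < f i ∧ i < g j then 1 else 0 := by
    apply Finset.sum_congr rfl
    intro i hi
    simp only [mem_erase, mem_Icc] at hi
    obtain ⟨hik1, hik, hi1, him⟩ := hi
    apply Finset.sum_congr rfl
    intro j hj
    simp only [mem_Icc] at hj
    have h1 := hg' j hj.1 hj.2
    have h2 := hoff i hik hik1
    have h3 := (hclass j hj.1 hj.2).1
    have h4 := (hclass j hj.1 hj.2).2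
    rw [h1, h2]
    unfold swp
    split_ifs <;> omega
  rw [hrest]
  -- rows k and k+1
  have hrow : (∑ j ∈ Icc 1 m, if j < f' (k+1) ∧ k+1 < g' j then 1 else 0)
      + (∑ j ∈ Icc 1 m, if j < f' k ∧ k < g' j then 1 else 0)
      = ((∑ j ∈ Icc 1 m, if j < f (k+1) ∧ k+1 < g j then 1 else 0)
      + (∑ j ∈ Icc 1 m, if j < f k ∧ k < g j then 1 else 0)) + 1 := by
    rw [← Finset.sum_add_distrib, ← Finset.sum_add_distrib]
    have humem' : f k ∈ Icc 1 m := by simp only [mem_Icc]; omega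
    rw [← Finset.sum_erase_add _ _ humem', ← Finset.sum_erase_add _ _ humem']
    have hpt : ((if f k < f' (k+1) ∧ k+1 < g' (f k) then 1 else 0)
        + (if f k < f' k ∧ k < g' (f k) then 1 else 0))
        = ((if f k < f (k+1) ∧ k+1 < g (f k) then 1 else 0)
        + (if f k < f k ∧ k < g (f k) then 1 else 0)) + 1 := by
      rw [hg' (f k) (by omega) (by omega), hgu]
      unfold swp
      rw [hsw1, hsw2]
      split_ifs <;> omega
    have hrest2 : (∑ j ∈ (Icc 1 m).erase (f k),
          ((if j < f' (k+1) ∧ k+1 < g' j then 1 else 0)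
            + (if j < f' k ∧ k < g' j then 1 else 0)))
        = ∑ j ∈ (Icc 1 m).erase (f k),
          ((if j < f (k+1) ∧ k+1 < g j then 1 else 0)
            + (if j < f k ∧ k < g j then 1 else 0)) := by
      apply Finset.sum_congr rfl
      intro j hj
      simp only [mem_erase, mem_Icc] at hj
      obtain ⟨hju, hj1, hjm⟩ := hj
      have h1 := hg' j hj1 hjm
      have h3 := (hclass j hj1 hjm).1
      have h4 := (hclass j hj1 hjm).2
      rw [h1, hsw1, hsw2]
      unfold swp
      split_ifs <;> omega
    omega
  omega

lemma gauss_sum (n : ℕ) : ∑ i ∈ Icc 1 n, (n - i) = n.choose 2 := by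
  induction n with
  | zero => simp
  | succ n ih =>
    rw [Finset.sum_Icc_succ_top (by omega : 1 ≤ n + 1)]
    have hc : ∀ i ∈ Icc 1 n, n + 1 - i = (n - i) + 1 := by
      intro i hi; simp only [Finset.mem_Icc] at hi; omega
    rw [Finset.sum_congr rfl hc, Finset.sum_add_distrib, ih, Finset.sum_const,
      Nat.card_Icc, smul_eq_mul, mul_one]
    have hch := Nat.choose_succ_succ' n 1
    rw [Nat.choose_one_right] at hch
    norm_num at hch ⊢
    omega

lemma count_gt (a n : ℕ) :
    (∑ j ∈ Icc 1 n, if a < j then 1 else 0) = n - a := by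
  rw [← Finset.card_filter]
  have : (Icc 1 n).filter (fun j => a < j) = Icc (a+1) n := by
    ext x
    simp only [Finset.mem_filter, Finset.mem_Icc]
    omega
  rw [this, Nat.card_Icc]
  omega

lemma count_le (a n : ℕ) (ha : a ≤ n) :
    (∑ j ∈ Icc 1 n, if j ≤ a then 1 else 0) = a := by
  rw [← Finset.card_filter]
  have : (Icc 1 n).filter (fun j => j ≤ a) = Icc 1 a := by
    ext x
    simp only [Finset.mem_filter, Finset.mem_Icc]
    omega
  rw [this, Nat.card_Icc]
  omega

end Comb

section Mat

variable {K : Type*} [Field K] {V : Type*} [AddCommGroup V] [Module K V] {m : ℕ}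

noncomputable def dm (A B : Vx K V m) (i j : ℕ) : ℕ :=
  finrank K ↥(E m A.1 i ⊓ E m B.1 j)

lemma dm_comm (A B : Vx K V m) (i j : ℕ) : dm A B i j = dm B A j i := by
  rw [dm, dm, inf_comm]

lemma dm_zero_left (A B : Vx K V m) (j : ℕ) : dm A B 0 j = 0 := by
  rw [dm, E_zero, bot_inf_eq, finrank_bot]

lemma dm_zero_right (A B : Vx K V m) (i : ℕ) : dm A B i 0 = 0 := by
  rw [dm, E_zero, inf_bot_eq, finrank_bot]

variable [FiniteDimensional K V]

lemma dm_mono_left (A B : Vx K V m) {i i' : ℕ} (h : i ≤ i') (j : ℕ) :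
    dm A B i j ≤ dm A B i' j :=
  Submodule.finrank_mono (inf_le_inf_right _ (E_mono A.2 h))

lemma dm_mono_right (A B : Vx K V m) (i : ℕ) {j j' : ℕ} (h : j ≤ j') :
    dm A B i j ≤ dm A B i j' :=
  Submodule.finrank_mono (inf_le_inf_left _ (E_mono B.2 h))

lemma dm_submod (A B : Vx K V m) (i : ℕ) {j j' : ℕ} (h : j ≤ j') :
    dm A B (i+1) j + dm A B i j' ≤ dm A B (i+1) j' + dm A B i j :=
  submod_ineq (E_mono A.2 (Nat.le_succ i)) (E_mono B.2 h)

variable (hdim : finrank K V = m) (hm : 2 ≤ m)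
include hdim hm

lemma dm_le_left (A B : Vx K V m) {i : ℕ} (hi : i ≤ m) (j : ℕ) : dm A B i j ≤ i :=
  (Submodule.finrank_mono inf_le_left).trans_eq (E_finrank hdim A.2 hm hi)

lemma dm_top_right (A B : Vx K V m) {i : ℕ} (hi : i ≤ m) : dm A B i m = i := by
  rw [dm, E_top B.1 le_rfl hm, inf_top_eq]
  exact E_finrank hdim A.2 hm hi

lemma dm_step_left (A B : Vx K V m) {i : ℕ} (hi : i + 1 ≤ m) (j : ℕ) :
    dm A B (i+1) j ≤ dm A B i j + 1 := by
  have h := submod_ineq (K := K) (V := V)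
    (E_mono A.2 (Nat.le_succ i)) (le_top : E m B.1 j ≤ ⊤)
  rw [inf_top_eq, inf_top_eq] at h
  rw [E_finrank hdim A.2 hm hi, E_finrank hdim A.2 hm (by omega)] at h
  change dm A B (i+1) j + i ≤ (i + 1) + dm A B i j at h
  omega

lemma dm_step_right (A B : Vx K V m) (i : ℕ) {j : ℕ} (hj : j + 1 ≤ m) :
    dm A B i (j+1) ≤ dm A B i j + 1 := by
  rw [dm_comm A B i (j+1), dm_comm A B i j]
  exact dm_step_left hdim hm B A hj i

noncomputable def jmp (A B : Vx K V m) (i : ℕ) : ℕ :=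
  sInf {j | dm A B i j = dm A B (i-1) j + 1}

omit hdim hm in
lemma jmp_eq_of (A B : Vx K V m) {i j0 : ℕ}
    (hmem : dm A B i j0 = dm A B (i-1) j0 + 1)
    (hnot : ∀ j < j0, dm A B i j ≠ dm A B (i-1) j + 1) :
    jmp A B i = j0 := by
  refine le_antisymm (Nat.sInf_le hmem) ?_
  by_contra hlt
  push_neg at hlt
  have hmem' := Nat.sInf_mem (⟨j0, hmem⟩ : {j | dm A B i j = dm A B (i-1) j + 1}.Nonempty)
  exact hnot _ hlt hmem'

lemma jmp_mem (A B : Vx K V m) {i : ℕ} (h1 : 1 ≤ i) (h2 : i ≤ m) :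
    dm A B i (jmp A B i) = dm A B (i-1) (jmp A B i) + 1 := by
  have hne : ({j | dm A B i j = dm A B (i-1) j + 1}).Nonempty := ⟨m, by
    simp only [Set.mem_setOf_eq]
    rw [dm_top_right hdim hm A B h2, dm_top_right hdim hm A B (by omega)]
    omega⟩
  have h := Nat.sInf_mem hne
  exact h

lemma jmp_le (A B : Vx K V m) {i : ℕ} (h1 : 1 ≤ i) (h2 : i ≤ m) :
    jmp A B i ≤ m := by
  have hmem : m ∈ {j | dm A B i j = dm A B (i-1) j + 1} := by
    simp only [Set.mem_setOf_eq]
    rw [dm_top_right hdim hm A B h2, dm_top_right hdim hm A B (by omega)]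
    omega
  exact Nat.sInf_le hmem

lemma jmp_pos (A B : Vx K V m) {i : ℕ} (h1 : 1 ≤ i) (h2 : i ≤ m) :
    1 ≤ jmp A B i := by
  rcases Nat.eq_zero_or_pos (jmp A B i) with h0 | h0
  · have := jmp_mem hdim hm A B h1 h2
    rw [h0, dm_zero_right, dm_zero_right] at this
    omega
  · exact h0

lemma jmp_lt (A B : Vx K V m) {i j : ℕ} (h1 : 1 ≤ i) (h2 : i ≤ m)
    (hj : j < jmp A B i) : dm A B i j = dm A B (i-1) j := by
  have hnot : j ∉ {j | dm A B i j = dm A B (i-1) j + 1} := Nat.notMem_of_lt_sInf hj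
  simp only [Set.mem_setOf_eq] at hnot
  have hlo := dm_mono_left (A := A) (B := B) (Nat.sub_le i 1) j
  have hhi : dm A B i j ≤ dm A B (i-1) j + 1 := by
    have := dm_step_left hdim hm A B (i := i - 1) (by omega) j
    rwa [Nat.sub_add_cancel h1] at this
  omega

lemma jmp_ge (A B : Vx K V m) {i j : ℕ} (h1 : 1 ≤ i) (h2 : i ≤ m)
    (hj : jmp A B i ≤ j) : dm A B i j = dm A B (i-1) j + 1 := by
  have hsub := dm_submod (A := A) (B := B) (i - 1) hj
  rw [Nat.sub_add_cancel h1] at hsub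
  have hmem := jmp_mem hdim hm A B h1 h2
  have hhi : dm A B i j ≤ dm A B (i-1) j + 1 := by
    have := dm_step_left hdim hm A B (i := i - 1) (by omega) j
    rwa [Nat.sub_add_cancel h1] at this
  omega

lemma dm_telescope (A B : Vx K V m) {i : ℕ} (h2 : i ≤ m) (j : ℕ) :
    dm A B i j = ∑ t ∈ Icc 1 i, if jmp A B t ≤ j then 1 else 0 := by
  induction i with
  | zero => simp [dm_zero_left]
  | succ n ih =>
    rw [Finset.sum_Icc_succ_top (by omega : 1 ≤ n + 1), ← ih (by omega)]
    have h1 : 1 ≤ n + 1 := by omega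
    rcases le_or_gt (jmp A B (n+1)) j with hle | hlt
    · have := jmp_ge hdim hm A B h1 h2 hle
      simp only [Nat.add_sub_cancel] at this
      rw [if_pos hle]
      omega
    · have := jmp_lt hdim hm A B h1 h2 hlt
      simp only [Nat.add_sub_cancel] at this
      rw [if_neg (by omega)]
      omega

omit hdim hm in
omit [FiniteDimensional K V] in
lemma sum_two_lt {s : Finset ℕ} {a b : ℕ → ℕ} {i i' : ℕ} (hi : i ∈ s) (hi' : i' ∈ s)
    (hne : i ≠ i') (hab : ∀ t ∈ s, b t ≤ a t) (hx1 : b i + 1 ≤ a i) (hx2 : b i' + 1 ≤ a i') :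
    (∑ t ∈ s, b t) + 2 ≤ ∑ t ∈ s, a t := by
  classical
  rw [← Finset.sum_erase_add s a hi, ← Finset.sum_erase_add s b hi]
  have hi'e : i' ∈ s.erase i := Finset.mem_erase.mpr ⟨hne.symm, hi'⟩
  rw [← Finset.sum_erase_add _ a hi'e, ← Finset.sum_erase_add _ b hi'e]
  have hle : ∑ t ∈ (s.erase i).erase i', b t ≤ ∑ t ∈ (s.erase i).erase i', a t :=
    Finset.sum_le_sum (fun t ht => hab t (Finset.mem_of_mem_erase (Finset.mem_of_mem_erase ht)))
  omega

lemma jmp_inj (A B : Vx K V m) {i i' : ℕ} (h1 : 1 ≤ i) (hii' : i < i') (h2 : i' ≤ m)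
    (heq : jmp A B i = jmp A B i') : False := by
  set j := jmp A B i with hj
  have hj1 : 1 ≤ j := jmp_pos hdim hm A B h1 (by omega)
  have hjm : j ≤ m := jmp_le hdim hm A B h1 (by omega)
  have ht1 := dm_telescope hdim hm A B h2 j
  have ht0 := dm_telescope hdim hm A B h2 (j-1)
  have hcol : dm A B i' j ≤ dm A B i' (j-1) + 1 := by
    have := dm_step_right hdim hm A B i' (j := j-1) (by omega)
    rwa [Nat.sub_add_cancel hj1] at this
  have hsum : (∑ t ∈ Icc 1 i', if jmp A B t ≤ j - 1 then 1 else 0) + 2 ≤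
      ∑ t ∈ Icc 1 i', if jmp A B t ≤ j then 1 else 0 := by
    apply sum_two_lt (i := i) (i' := i')
    · simp only [Finset.mem_Icc]; omega
    · simp only [Finset.mem_Icc]; omega
    · omega
    · intro t _; split_ifs <;> omega
    · split_ifs <;> omega
    · split_ifs <;> omega
  omega

lemma jmp_jmp (A B : Vx K V m) {i : ℕ} (h1 : 1 ≤ i) (h2 : i ≤ m) :
    jmp B A (jmp A B i) = i := by
  have hj1 : 1 ≤ jmp A B i := jmp_pos hdim hm A B h1 h2
  have hjm : jmp A B i ≤ m := jmp_le hdim hm A B h1 h2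
  have hmem := jmp_mem hdim hm A B h1 h2
  have hlt' : dm A B i (jmp A B i - 1) = dm A B (i-1) (jmp A B i - 1) :=
    jmp_lt hdim hm A B h1 h2 (by omega)
  have hcoli : dm A B i (jmp A B i) ≤ dm A B i (jmp A B i - 1) + 1 := by
    have := dm_step_right hdim hm A B i (j := jmp A B i - 1) (by omega)
    rwa [Nat.sub_add_cancel hj1] at this
  have hcolmono : dm A B (i-1) (jmp A B i - 1) ≤ dm A B (i-1) (jmp A B i) :=
    dm_mono_right A B _ (by omega)
  have hmemi : dm B A (jmp A B i) i = dm B A (jmp A B i - 1) i + 1 := by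
    rw [dm_comm B A (jmp A B i) i, dm_comm B A (jmp A B i - 1) i]; omega
  have hle : jmp B A (jmp A B i) ≤ i := Nat.sInf_le hmemi
  rcases lt_or_ge (jmp B A (jmp A B i)) i with hlt2 | hge
  · have hx := jmp_ge hdim hm B A (i := jmp A B i) hj1 hjm (j := i - 1) (by omega)
    rw [dm_comm B A (jmp A B i) (i-1), dm_comm B A (jmp A B i - 1) (i-1)] at hx
    omega
  · omega

lemma jmp_self (B : Vx K V m) {i : ℕ} (h1 : 1 ≤ i) (h2 : i ≤ m) :
    jmp B B i = i := by
  have dBB : ∀ x y : ℕ, x ≤ y → x ≤ m → dm B B x y = x := by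
    intro x y hxy hxm
    rw [dm, inf_eq_left.mpr (E_mono B.2 hxy)]
    exact E_finrank hdim B.2 hm hxm
  have dBB' : ∀ x y : ℕ, y ≤ x → y ≤ m → dm B B x y = y := by
    intro x y hxy hym
    rw [dm, inf_eq_right.mpr (E_mono B.2 hxy)]
    exact E_finrank hdim B.2 hm hym
  apply jmp_eq_of
  · rw [dBB i i le_rfl h2, dBB (i-1) i (by omega) (by omega)]
    omega
  · intro x hx
    rw [dBB' i x (by omega) (by omega), dBB' (i-1) x (by omega) (by omega)]
    omega

noncomputable def Phi (A B : Vx K V m) : ℕ :=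
  ∑ i ∈ Icc 1 m, ∑ j ∈ Icc 1 m, if j < jmp A B i ∧ i < jmp B A j then 1 else 0

lemma Phi_self (B : Vx K V m) : Phi B B = 0 := by
  apply Finset.sum_eq_zero
  intro i hi
  apply Finset.sum_eq_zero
  intro j hj
  simp only [Finset.mem_Icc] at hi hj
  rw [jmp_self hdim hm B hi.1 hi.2, jmp_self hdim hm B hj.1 hj.2, if_neg (by omega)]

omit hdim hm in
lemma dm_eq_of_rows (A A'' B : Vx K V m) {k : ℕ}
    (hE : ∀ i, i ≠ k → E m A''.1 i = E m A.1 i) {i : ℕ} (hik : i ≠ k) (j : ℕ) :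
    dm A'' B i j = dm A B i j := by
  rw [dm, dm, hE i hik]

omit hdim hm in
lemma jmp_off (A A'' B : Vx K V m) {k : ℕ} (hk1 : 1 ≤ k)
    (hE : ∀ i, i ≠ k → E m A''.1 i = E m A.1 i) {i : ℕ} (h1 : i ≠ k) (h2 : i ≠ k+1) :
    jmp A'' B i = jmp A B i := by
  unfold jmp
  congr 1
  ext j
  simp only [Set.mem_setOf_eq]
  rw [dm_eq_of_rows A A'' B hE h1 j, dm_eq_of_rows A A'' B hE (by omega) j]

lemma jmp_in_pair (A A'' B : Vx K V m) {k : ℕ} (hk1 : 1 ≤ k) (hkm : k + 1 ≤ m)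
    (hE : ∀ i, i ≠ k → E m A''.1 i = E m A.1 i) {t : ℕ} (ht : t = k ∨ t = k+1) :
    jmp A'' B t = jmp A B k ∨ jmp A'' B t = jmp A B (k+1) := by
  have ht1 : 1 ≤ t := by omega
  have htm : t ≤ m := by omega
  set j := jmp A'' B t with hj
  have hj1 : 1 ≤ j := jmp_pos hdim hm A'' B ht1 htm
  have hjm : j ≤ m := jmp_le hdim hm A'' B ht1 htm
  set x := jmp B A j with hx
  have hx1 : 1 ≤ x := jmp_pos hdim hm B A hj1 hjm
  have hxm : x ≤ m := jmp_le hdim hm B A hj1 hjm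
  have hfx : jmp A B x = j := jmp_jmp hdim hm B A hj1 hjm
  by_cases hxk : x = k
  · left; rw [← hfx, hxk]
  by_cases hxk1 : x = k+1
  · right; rw [← hfx, hxk1]
  · exfalso
    have heq : jmp A'' B x = jmp A'' B t := by
      rw [jmp_off A A'' B hk1 hE hxk hxk1, hfx]
    rcases lt_trichotomy x t with h | h | h
    · exact jmp_inj hdim hm A'' B hx1 h htm heq
    · omega
    · exact jmp_inj hdim hm A'' B ht1 h hxm heq.symm

lemma jmp_dichotomy (A A'' B : Vx K V m) {k : ℕ} (hk1 : 1 ≤ k) (hkm : k + 1 ≤ m)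
    (hE : ∀ i, i ≠ k → E m A''.1 i = E m A.1 i) :
    (jmp A'' B k = jmp A B k ∧ jmp A'' B (k+1) = jmp A B (k+1)) ∨
    (jmp A'' B k = jmp A B (k+1) ∧ jmp A'' B (k+1) = jmp A B k) := by
  have h1 := jmp_in_pair hdim hm A A'' B hk1 hkm hE (Or.inl rfl)
  have h2 := jmp_in_pair hdim hm A A'' B hk1 hkm hE (Or.inr rfl)
  have h3 : jmp A'' B k ≠ jmp A'' B (k+1) := fun h =>
    jmp_inj hdim hm A'' B (by omega) (by omega) (by omega) h
  have h4 : jmp A B k ≠ jmp A B (k+1) := fun h =>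
    jmp_inj hdim hm A B (by omega) (by omega) (by omega) h
  omega

lemma Phi_congr (A A'' B : Vx K V m)
    (h : ∀ i, 1 ≤ i → i ≤ m → jmp A'' B i = jmp A B i) :
    Phi A'' B = Phi A B := by
  have hc : ∀ j, 1 ≤ j → j ≤ m → jmp B A'' j = jmp B A j := by
    intro j hj1 hjm
    set x := jmp B A'' j with hx
    have hx1 : 1 ≤ x := jmp_pos hdim hm B A'' hj1 hjm
    have hxm : x ≤ m := jmp_le hdim hm B A'' hj1 hjm
    have : jmp A'' B x = j := jmp_jmp hdim hm B A'' hj1 hjm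
    rw [h x hx1 hxm] at this
    rw [← this, jmp_jmp hdim hm A B hx1 hxm]
  apply Finset.sum_congr rfl
  intro i hi
  apply Finset.sum_congr rfl
  intro j hj
  simp only [Finset.mem_Icc] at hi hj
  rw [h i hi.1 hi.2, hc j hj.1 hj.2]

lemma Phi_swap_cases (A A'' B : Vx K V m) {k : ℕ} (hk1 : 1 ≤ k) (hkm : k + 1 ≤ m)
    (hE : ∀ i, i ≠ k → E m A''.1 i = E m A.1 i)
    (hsw1 : jmp A'' B k = jmp A B (k+1)) (hsw2 : jmp A'' B (k+1) = jmp A B k) :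
    (jmp A B k < jmp A B (k+1) ∧ Phi A'' B = Phi A B + 1) ∨
    (jmp A B (k+1) < jmp A B k ∧ Phi A B = Phi A'' B + 1) := by
  have h4 : jmp A B k ≠ jmp A B (k+1) := fun h =>
    jmp_inj hdim hm A B (by omega) (by omega) (by omega) h
  rcases lt_or_gt_of_ne h4 with hlt | hgt
  · left
    refine ⟨hlt, ?_⟩
    apply L_swap (f := jmp A B) (g := jmp B A) hk1 hkm
    · exact fun i h1 h2 => ⟨jmp_pos hdim hm A B h1 h2, jmp_le hdim hm A B h1 h2⟩
    · exact fun j h1 h2 => ⟨jmp_pos hdim hm B A h1 h2, jmp_le hdim hm B A h1 h2⟩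
    · exact fun i h1 h2 => jmp_jmp hdim hm A B h1 h2
    · exact fun j h1 h2 => jmp_jmp hdim hm B A h1 h2
    · exact fun i h1 h2 => jmp_jmp hdim hm A'' B h1 h2
    · exact fun i h1 h2 => jmp_off A A'' B hk1 hE h1 h2
    · exact hsw1
    · exact hsw2
    · exact hlt
  · right
    refine ⟨hgt, ?_⟩
    apply L_swap (f := jmp A'' B) (g := jmp B A'') hk1 hkm
    · exact fun i h1 h2 => ⟨jmp_pos hdim hm A'' B h1 h2, jmp_le hdim hm A'' B h1 h2⟩
    · exact fun j h1 h2 => ⟨jmp_pos hdim hm B A'' h1 h2, jmp_le hdim hm B A'' h1 h2⟩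
    · exact fun i h1 h2 => jmp_jmp hdim hm A'' B h1 h2
    · exact fun j h1 h2 => jmp_jmp hdim hm B A'' h1 h2
    · exact fun i h1 h2 => jmp_jmp hdim hm A B h1 h2
    · exact fun i h1 h2 => (jmp_off A A'' B hk1 hE h1 h2).symm
    · rw [hsw2]
    · rw [hsw1]
    · rw [hsw1, hsw2]; exact hgt

lemma Phi_near (A A'' B : Vx K V m) {k : ℕ} (hk1 : 1 ≤ k) (hkm : k + 1 ≤ m)
    (hE : ∀ i, i ≠ k → E m A''.1 i = E m A.1 i) :
    Phi A B ≤ Phi A'' B + 1 ∧ Phi A'' B ≤ Phi A B + 1 := by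
  rcases jmp_dichotomy hdim hm A A'' B hk1 hkm hE with ⟨he1, he2⟩ | ⟨hs1, hs2⟩
  · have heq : Phi A'' B = Phi A B := by
      apply Phi_congr hdim hm
      intro i hi1 him
      by_cases h1 : i = k
      · rw [h1]; exact he1
      by_cases h2 : i = k + 1
      · rw [h2]; exact he2
      · exact jmp_off A A'' B hk1 hE h1 h2
    omega
  · rcases Phi_swap_cases hdim hm A A'' B hk1 hkm hE hs1 hs2 with ⟨_, h⟩ | ⟨_, h⟩ <;> omega

omit hdim hm in
include hm in
lemma adj_rows {A A'' : Vx K V m} (hadj : (flagGraphOf K V m).Adj A A'') :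
    ∃ k, 1 ≤ k ∧ k + 1 ≤ m ∧ ∀ i, i ≠ k → E m A''.1 i = E m A.1 i := by
  obtain ⟨t, ht, huniq⟩ := hadj
  have htlt : t.val < m - 1 := t.isLt
  refine ⟨t.val + 1, by omega, by omega, ?_⟩
  intro i hik
  rcases Nat.eq_zero_or_pos i with h0 | h0
  · subst h0; rw [E_zero, E_zero]
  rcases le_or_gt i (m-1) with h1 | h1
  · rw [E_mid _ h0 h1, E_mid _ h0 h1]
    by_contra hne
    have : (⟨i - 1, by omega⟩ : Fin (m-1)) = t := huniq _ (fun h => hne (by rw [h]))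
    apply hik
    have := congrArg Fin.val this
    simp only [Fin.val_mk] at this
    omega
  · rw [E_top _ (by omega) hm, E_top _ (by omega) hm]

lemma Phi_le_length {A B : Vx K V m} (w : (flagGraphOf K V m).Walk A B) :
    Phi A B ≤ w.length := by
  induction w with
  | nil => rw [Phi_self hdim hm]; simp
  | @cons u v w h p ih =>
    obtain ⟨k, hk1, hkm, hE⟩ := adj_rows hm h
    have hnear := (Phi_near hdim hm u v w hk1 hkm hE).1
    rw [SimpleGraph.Walk.length_cons]
    omega

lemma jmp_id_of_no_descent (A B : Vx K V m)
    (h : ∀ k, 1 ≤ k → k + 1 ≤ m → jmp A B k < jmp A B (k+1)) :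
    ∀ i, 1 ≤ i → i ≤ m → jmp A B i = i := by
  have hlow : ∀ i, 1 ≤ i → i ≤ m → i ≤ jmp A B i := by
    intro i
    induction i with
    | zero => omega
    | succ n ih =>
      intro _ h2
      rcases Nat.eq_zero_or_pos n with h0 | h0
      · subst h0; exact jmp_pos hdim hm A B (by omega) h2
      · have ha := h n h0 (by omega)
        have hb := ih h0 (by omega)
        omega
  have hgap : ∀ s i, 1 ≤ i → i + s ≤ m → jmp A B i + s ≤ jmp A B (i + s) := by
    intro s
    induction s with
    | zero => intro i _ _; simp
    | succ n ih =>
      intro i h1 h2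
      have hstep := h (i + n) (by omega) (by omega)
      have hih := ih i h1 (by omega)
      have hre : i + (n + 1) = (i + n) + 1 := rfl
      rw [hre]
      omega
  intro i h1 h2
  have h3 := hlow i h1 h2
  have h4 := hgap (m - i) i h1 (by omega)
  have h5 : jmp A B m ≤ m := jmp_le hdim hm A B (by omega) le_rfl
  rw [show i + (m - i) = m by omega] at h4
  omega

lemma Phi_pos_of_descent (A B : Vx K V m) {k : ℕ} (hk1 : 1 ≤ k) (hkm : k + 1 ≤ m)
    (hdesc : jmp A B (k+1) < jmp A B k) : 1 ≤ Phi A B := by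
  set j0 := jmp A B (k+1) with hj0
  have hj01 : 1 ≤ j0 := jmp_pos hdim hm A B (by omega) (by omega)
  have hj0m : j0 ≤ m := jmp_le hdim hm A B (by omega) (by omega)
  have hcj : jmp B A j0 = k + 1 := jmp_jmp hdim hm A B (by omega) (by omega)
  have hterm : (if j0 < jmp A B k ∧ k < jmp B A j0 then 1 else 0) = 1 := by
    rw [if_pos ⟨hdesc, by omega⟩]
  have hinner : 1 ≤ ∑ j ∈ Icc 1 m, if j < jmp A B k ∧ k < jmp B A j then 1 else 0 := by
    have hs := Finset.single_le_sum
      (f := fun j => if j < jmp A B k ∧ k < jmp B A j then 1 else 0)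
      (fun _ _ => Nat.zero_le _) (show j0 ∈ Icc 1 m by simp only [Finset.mem_Icc]; omega)
    omega
  calc 1 ≤ ∑ j ∈ Icc 1 m, if j < jmp A B k ∧ k < jmp B A j then 1 else 0 := hinner
    _ ≤ Phi A B := Finset.single_le_sum
        (f := fun i => ∑ j ∈ Icc 1 m, if j < jmp A B i ∧ i < jmp B A j then 1 else 0)
        (fun _ _ => Nat.zero_le _) (by simp only [Finset.mem_Icc]; omega)

lemma eq_of_Phi_eq_zero (A B : Vx K V m) (h : Phi A B = 0) : A = B := by
  have hnod : ∀ k, 1 ≤ k → k + 1 ≤ m → jmp A B k < jmp A B (k+1) := by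
    intro k hk1 hkm
    rcases lt_trichotomy (jmp A B k) (jmp A B (k+1)) with hx | hx | hx
    · exact hx
    · exact absurd hx (fun hx => jmp_inj hdim hm A B (by omega) (by omega) (by omega) hx)
    · have := Phi_pos_of_descent hdim hm A B hk1 hkm hx
      omega
  have hid := jmp_id_of_no_descent hdim hm A B hnod
  have hdiag : ∀ i, 1 ≤ i → i ≤ m → dm A B i i = i := by
    intro i h1 h2
    rw [dm_telescope hdim hm A B h2 i]
    have : ∀ t ∈ Icc 1 i, (if jmp A B t ≤ i then 1 else 0) = 1 := by
      intro t ht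
      simp only [Finset.mem_Icc] at ht
      rw [hid t ht.1 (by omega), if_pos ht.2]
    rw [Finset.sum_congr rfl this, Finset.sum_const, Nat.card_Icc, smul_eq_mul, mul_one]
    omega
  have hcomp : ∀ t : Fin (m-1), A.1 t = B.1 t := by
    intro t
    have htlt : t.val < m - 1 := t.isLt
    have h1 : 1 ≤ t.val + 1 := by omega
    have h2 : t.val + 1 ≤ m := by omega
    have hd := hdiag (t.val+1) h1 h2
    have hfA : finrank K ↥(E m A.1 (t.val+1)) = t.val + 1 := E_finrank hdim A.2 hm h2
    have hfB : finrank K ↥(E m B.1 (t.val+1)) = t.val + 1 := E_finrank hdim B.2 hm h2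
    have hinf : E m A.1 (t.val+1) ⊓ E m B.1 (t.val+1) = E m A.1 (t.val+1) := by
      apply Submodule.eq_of_le_of_finrank_le inf_le_left
      rw [hfA]
      exact le_of_eq hd.symm
    have hle : E m A.1 (t.val+1) ≤ E m B.1 (t.val+1) := by
      rw [← hinf]; exact inf_le_right
    have heq : E m A.1 (t.val+1) = E m B.1 (t.val+1) :=
      Submodule.eq_of_le_of_finrank_le hle (by omega)
    rw [← E_comp A.1 t, ← E_comp B.1 t, heq]
  exact Subtype.ext (funext hcomp)

lemma exists_adj_step (A B : Vx K V m) (hne : Phi A B ≠ 0) :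
    ∃ A' : Vx K V m, (flagGraphOf K V m).Adj A A' ∧ Phi A B = Phi A' B + 1 := by
  -- there is a descent
  have hdesc : ∃ k, 1 ≤ k ∧ k + 1 ≤ m ∧ jmp A B (k+1) < jmp A B k := by
    by_contra hno
    push_neg at hno
    have hnod : ∀ k, 1 ≤ k → k + 1 ≤ m → jmp A B k < jmp A B (k+1) := by
      intro k h1 h2
      refine lt_of_le_of_ne (hno k h1 h2) ?_
      exact fun h => jmp_inj hdim hm A B h1 (by omega) (by omega) h
    have hid := jmp_id_of_no_descent hdim hm A B hnod
    apply hne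
    apply Finset.sum_eq_zero
    intro i hi
    apply Finset.sum_eq_zero
    intro j hj
    simp only [Finset.mem_Icc] at hi hj
    have hcd : jmp B A j = j := by
      have h1 := hid j hj.1 hj.2
      have := jmp_jmp hdim hm A B hj.1 hj.2
      rwa [h1] at this
    rw [hid i hi.1 hi.2, hcd, if_neg (by omega)]
  obtain ⟨k, hk1, hkm, hdesc⟩ := hdesc
  have hv1 : 1 ≤ jmp A B (k+1) := jmp_pos hdim hm A B (by omega) (by omega)
  have hvm : jmp A B (k+1) ≤ m := jmp_le hdim hm A B (by omega) (by omega)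
  set v := jmp A B (k+1) with hv
  have hJ1 : dm A B (k+1) v = dm A B k v + 1 := by
    have := jmp_ge hdim hm A B (i := k+1) (by omega) (by omega) (le_of_eq hv.symm)
    simpa using this
  have hJ2 : dm A B k v = dm A B (k-1) v := by
    have := jmp_lt hdim hm A B (i := k) (by omega) (by omega) (j := v) hdesc
    rwa [show k - 1 = k - 1 from rfl] at this
  set newk := E m A.1 (k-1) ⊔ (E m A.1 (k+1) ⊓ E m B.1 v) with hnewk
  have hinf : E m A.1 (k-1) ⊓ (E m A.1 (k+1) ⊓ E m B.1 v) = E m A.1 (k-1) ⊓ E m B.1 v := by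
    rw [← inf_assoc, inf_eq_left.mpr (E_mono A.2 (by omega : k - 1 ≤ k + 1))]
  have hfr : finrank K ↥newk = k := by
    have hsum := Submodule.finrank_sup_add_finrank_inf_eq
      (E m A.1 (k-1)) (E m A.1 (k+1) ⊓ E m B.1 v)
    rw [hinf] at hsum
    have hL : finrank K ↥(E m A.1 (k-1)) = k - 1 := E_finrank hdim A.2 hm (by omega)
    have hR : finrank K ↥(E m A.1 (k+1) ⊓ E m B.1 v) = dm A B (k+1) v := rfl
    have hI : finrank K ↥(E m A.1 (k-1) ⊓ E m B.1 v) = dm A B (k-1) v := rfl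
    rw [hL, hR, hI, ← hnewk] at hsum
    omega
  have hlow : E m A.1 (k-1) ≤ newk := le_sup_left
  have hhigh : newk ≤ E m A.1 (k+1) :=
    sup_le (E_mono A.2 (by omega)) inf_le_left
  have hbig : dm A B k v + 1 ≤ finrank K ↥(newk ⊓ E m B.1 v) := by
    have hsub : E m A.1 (k+1) ⊓ E m B.1 v ≤ newk ⊓ E m B.1 v :=
      le_inf le_sup_right inf_le_right
    have := Submodule.finrank_mono hsub
    change dm A B (k+1) v ≤ _ at this
    omega
  have hnek : newk ≠ E m A.1 k := by
    intro h
    rw [h] at hbig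
    change dm A B k v + 1 ≤ dm A B k v at hbig
    omega
  -- the new flag
  set fl' : Fin (m-1) → Submodule K V := fun t => if t.val = k - 1 then newk else A.1 t with hfl'
  have hfl'app : ∀ t : Fin (m-1), fl' t = if t.val = k - 1 then newk else A.1 t :=
    fun _ => rfl
  have hfl'flag : IsCompleteFlagOf K m fl' := by
    constructor
    · intro t
      by_cases ht : t.val = k - 1
      · rw [hfl'app t, if_pos ht, hfr]; omega
      · rw [hfl'app t, if_neg ht]
        exact A.2.1 t
    · intro t t' htt'
      have hml : t.val ≤ t'.val := Fin.le_def.mp htt'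
      by_cases ht : t.val = k - 1
      · by_cases ht' : t'.val = k - 1
        · have hteq : t = t' := Fin.ext (by omega)
          rw [hteq]
        · rw [hfl'app t, hfl'app t', if_pos ht, if_neg ht']
          refine hhigh.trans ?_
          rw [← E_comp A.1 t']
          exact E_mono A.2 (by omega)
      · by_cases ht' : t'.val = k - 1
        · rw [hfl'app t, hfl'app t', if_neg ht, if_pos ht']
          refine le_trans ?_ hlow
          rw [← E_comp A.1 t]
          exact E_mono A.2 (by omega)
        · rw [hfl'app t, hfl'app t', if_neg ht, if_neg ht']
          exact A.2.2 t t' htt'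
  set A' : Vx K V m := ⟨fl', hfl'flag⟩ with hA'
  have hA'app : ∀ t : Fin (m-1), A'.1 t = fl' t := fun _ => rfl
  have hE' : ∀ i, i ≠ k → E m A'.1 i = E m A.1 i := by
    intro i hik
    rcases Nat.eq_zero_or_pos i with h0 | h0
    · subst h0; rw [E_zero, E_zero]
    rcases le_or_gt i (m-1) with h1 | h1
    · rw [E_mid _ h0 h1, E_mid _ h0 h1]
      have hne3 : (⟨i - 1, by omega⟩ : Fin (m-1)).val ≠ k - 1 := by
        simp only [Fin.val_mk]; omega
      rw [hA'app, hfl'app]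
      exact if_neg hne3
    · rw [E_top _ (by omega) hm, E_top _ (by omega) hm]
  have hEk : E m A'.1 k = newk := by
    rw [E_mid _ (by omega) (by omega), hA'app, hfl'app]
    exact if_pos rfl
  have ht0 : k - 1 < m - 1 := by omega
  have hadj : (flagGraphOf K V m).Adj A A' := by
    refine ⟨⟨k - 1, ht0⟩, ?_, ?_⟩
    · show A.1 ⟨k - 1, ht0⟩ ≠ A'.1 ⟨k - 1, ht0⟩
      rw [hA'app, hfl'app]
      have hc : ((⟨k - 1, ht0⟩ : Fin (m-1)) : ℕ) = k - 1 := rfl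
      rw [if_pos hc]
      intro h
      apply hnek
      rw [← h, ← E_comp A.1 ⟨k-1, ht0⟩]
      congr 1
      simp only [Fin.val_mk]
      omega
    · intro t ht
      by_contra hne2
      apply ht
      have hne4 : t.val ≠ k - 1 := fun h => hne2 (Fin.ext (by simpa using h))
      rw [hA'app, hfl'app]
      exact (if_neg hne4).symm
  -- A' differs in row k, so the dichotomy must be the swap
  have hdmbig : dm A B k v + 1 ≤ dm A' B k v := by
    change _ ≤ finrank K ↥(E m A'.1 k ⊓ E m B.1 v)
    rw [hEk]
    exact hbig
  rcases jmp_dichotomy hdim hm A A' B hk1 hkm hE' with ⟨he1, he2⟩ | ⟨hs1, hs2⟩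
  · exfalso
    have hall : ∀ t, 1 ≤ t → t ≤ m → jmp A' B t = jmp A B t := by
      intro t h1 h2
      by_cases hx1 : t = k
      · rw [hx1]; exact he1
      by_cases hx2 : t = k + 1
      · rw [hx2]; exact he2
      · exact jmp_off A A' B hk1 hE' hx1 hx2
    have h1 := dm_telescope hdim hm A' B (show k ≤ m by omega) v
    have h2 := dm_telescope hdim hm A B (show k ≤ m by omega) v
    have heqd : dm A' B k v = dm A B k v := by
      rw [h1, h2]
      apply Finset.sum_congr rfl
      intro t ht
      simp only [Finset.mem_Icc] at ht
      rw [hall t ht.1 (by omega)]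
    omega
  · rcases Phi_swap_cases hdim hm A A' B hk1 hkm hE' hs1 hs2 with ⟨hlt, _⟩ | ⟨_, h⟩
    · omega
    · exact ⟨A', hadj, h⟩

lemma exists_walk_le (n : ℕ) : ∀ A B : Vx K V m, Phi A B ≤ n →
    ∃ w : (flagGraphOf K V m).Walk A B, w.length ≤ n := by
  induction n with
  | zero =>
    intro A B h
    obtain rfl := eq_of_Phi_eq_zero hdim hm A B (by omega)
    exact ⟨SimpleGraph.Walk.nil, by simp⟩
  | succ n ih =>
    intro A B h
    by_cases h0 : Phi A B = 0
    · obtain rfl := eq_of_Phi_eq_zero hdim hm A B h0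
      exact ⟨SimpleGraph.Walk.nil, by simp⟩
    · obtain ⟨A', hadj, hphi⟩ := exists_adj_step hdim hm A B h0
      obtain ⟨w, hw⟩ := ih A' B (by omega)
      exact ⟨SimpleGraph.Walk.cons hadj w, by
        rw [SimpleGraph.Walk.length_cons]; omega⟩

lemma Phi_le_choose (A B : Vx K V m) : Phi A B ≤ m.choose 2 := by
  have h1 : Phi A B = ((Icc 1 m ×ˢ Icc 1 m).filter
      (fun p => p.2 < jmp A B p.1 ∧ p.1 < jmp B A p.2)).card := by
    rw [Finset.card_filter, Finset.sum_product]
    rfl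
  have h2 : ((Icc 1 m ×ˢ Icc 1 m).filter (fun p : ℕ × ℕ => p.1 < p.2)).card = m.choose 2 := by
    rw [Finset.card_filter, Finset.sum_product]
    rw [← gauss_sum m]
    apply Finset.sum_congr rfl
    intro i hi
    exact count_gt i m
  rw [h1, ← h2]
  apply Finset.card_le_card_of_injOn (fun p => (p.1, jmp B A p.2))
  · intro p hp
    simp only [Finset.mem_coe, Finset.mem_filter, Finset.mem_product, Finset.mem_Icc] at hp ⊢
    obtain ⟨⟨hp1, hp2⟩, hc1, hc2⟩ := hp
    exact ⟨⟨hp1, ⟨jmp_pos hdim hm B A hp2.1 hp2.2, jmp_le hdim hm B A hp2.1 hp2.2⟩⟩, hc2⟩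
  · intro p hp q hq heq
    simp only [Finset.mem_coe, Finset.mem_filter, Finset.mem_product, Finset.mem_Icc] at hp hq
    have heq' : (p.1, jmp B A p.2) = (q.1, jmp B A q.2) := heq
    simp only [Prod.mk.injEq] at heq'
    obtain ⟨h1', h2'⟩ := heq'
    have hb : p.2 = q.2 := by
      have ha := jmp_jmp hdim hm B A hp.1.2.1 hp.1.2.2
      have hb := jmp_jmp hdim hm B A hq.1.2.1 hq.1.2.2
      rw [← ha, ← hb, h2']
    exact Prod.ext h1' hb


-- span machinery
noncomputable def SP (K : Type*) [Field K] {V : Type*} [AddCommGroup V] [Module K V]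
    (e : ℕ → V) (s : Finset ℕ) : Submodule K V :=
  Submodule.span K (e '' ↑s)

omit [FiniteDimensional K V] hdim hm in
lemma SP_mono (e : ℕ → V) {s t : Finset ℕ} (h : s ⊆ t) : SP K e s ≤ SP K e t :=
  Submodule.span_mono (Set.image_mono (by exact_mod_cast h))

omit hdim hm in
lemma SP_le_card (e : ℕ → V) (s : Finset ℕ) : finrank K ↥(SP K e s) ≤ s.card := by
  have h1 : (Set.range fun x : (↑s : Set ℕ) => e ↑x).finrank K
      ≤ Fintype.card (↑s : Set ℕ) := finrank_range_le_card _
  rw [Set.finrank, ← Set.image_eq_range] at h1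
  exact h1.trans_eq (by simp)

omit [FiniteDimensional K V] hdim hm in
lemma SP_union (e : ℕ → V) (s t : Finset ℕ) : SP K e (s ∪ t) = SP K e s ⊔ SP K e t := by
  unfold SP
  rw [Finset.coe_union, Set.image_union, Submodule.span_union]

omit [FiniteDimensional K V] hdim hm in
lemma SP_top (e : ℕ → V) (hspan : SP K e (Finset.range m) = ⊤) {s : Finset ℕ}
    (h : Finset.range m ⊆ s) : SP K e s = ⊤ :=
  eq_top_iff.mpr (hspan ▸ SP_mono e h)

omit hm in
lemma SP_cover_dim (e : ℕ → V) (hspan : SP K e (Finset.range m) = ⊤) {s t : Finset ℕ}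
    (hcov : Finset.range m ⊆ s ∪ t) :
    m ≤ finrank K ↥(SP K e s) + finrank K ↥(SP K e t) := by
  have h1 : SP K e (s ∪ t) = ⊤ := SP_top e hspan hcov
  have h2 := Submodule.finrank_sup_add_finrank_inf_eq (SP K e s) (SP K e t)
  rw [← SP_union, h1, finrank_top, hdim] at h2
  omega

omit hm in
lemma SP_range_dim (e : ℕ → V) (hspan : SP K e (Finset.range m) = ⊤) {i : ℕ} (hi : i ≤ m) :
    finrank K ↥(SP K e (Finset.range i)) = i := by
  have hle : finrank K ↥(SP K e (Finset.range i)) ≤ i :=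
    le_trans (SP_le_card e _) (by simp)
  have hcov : Finset.range m ⊆ Finset.range i ∪ Finset.Ico i m := by
    intro x hx
    simp only [Finset.mem_range] at hx
    simp only [Finset.mem_union, Finset.mem_range, Finset.mem_Ico]
    omega
  have hge := SP_cover_dim hdim e hspan hcov
  have hup : finrank K ↥(SP K e (Finset.Ico i m)) ≤ m - i :=
    le_trans (SP_le_card e _) (by rw [Nat.card_Ico])
  omega

omit hm in
lemma SP_Ico_dim (e : ℕ → V) (hspan : SP K e (Finset.range m) = ⊤) {j : ℕ} (hj : j ≤ m) :
    finrank K ↥(SP K e (Finset.Ico (m - j) m)) = j := by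
  have hle : finrank K ↥(SP K e (Finset.Ico (m - j) m)) ≤ j :=
    le_trans (SP_le_card e _) (by rw [Nat.card_Ico]; omega)
  have hcov : Finset.range m ⊆ Finset.range (m - j) ∪ Finset.Ico (m - j) m := by
    intro x hx
    simp only [Finset.mem_range] at hx
    simp only [Finset.mem_union, Finset.mem_range, Finset.mem_Ico]
    omega
  have hge := SP_cover_dim hdim e hspan hcov
  have hup : finrank K ↥(SP K e (Finset.range (m - j))) ≤ m - j :=
    le_trans (SP_le_card e _) (by simp)
  omega

omit hm in
lemma SP_inf_dim_big (e : ℕ → V) (hspan : SP K e (Finset.range m) = ⊤) {i j : ℕ}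
    (hi : i ≤ m) (hj : j ≤ m) (hij : m ≤ i + j) :
    finrank K ↥(SP K e (Finset.range i) ⊓ SP K e (Finset.Ico (m - j) m)) = i + j - m := by
  have h2 := Submodule.finrank_sup_add_finrank_inf_eq
    (SP K e (Finset.range i)) (SP K e (Finset.Ico (m - j) m))
  have h1 : SP K e (Finset.range i) ⊔ SP K e (Finset.Ico (m - j) m) = ⊤ := by
    rw [← SP_union]
    apply SP_top e hspan
    intro x hx
    simp only [Finset.mem_range] at hx
    simp only [Finset.mem_union, Finset.mem_range, Finset.mem_Ico]
    omega
  rw [h1, finrank_top, hdim, SP_range_dim hdim e hspan hi, SP_Ico_dim hdim e hspan hj] at h2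
  omega

omit hm in
lemma SP_inf_dim_small (e : ℕ → V) (hspan : SP K e (Finset.range m) = ⊤) {i j : ℕ}
    (hij : i + j ≤ m) :
    finrank K ↥(SP K e (Finset.range i) ⊓ SP K e (Finset.Ico (m - j) m)) = 0 := by
  have hi : i ≤ m := by omega
  have hj : j ≤ m := by omega
  have h2 := Submodule.finrank_sup_add_finrank_inf_eq
    (SP K e (Finset.range i)) (SP K e (Finset.Ico (m - j) m))
  rw [SP_range_dim hdim e hspan hi, SP_Ico_dim hdim e hspan hj] at h2
  have hcov : Finset.range m ⊆ (Finset.range i ∪ Finset.Ico (m - j) m) ∪ Finset.Ico i (m - j) := by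
    intro x hx
    simp only [Finset.mem_range] at hx
    simp only [Finset.mem_union, Finset.mem_range, Finset.mem_Ico]
    omega
  have hge := SP_cover_dim hdim e hspan hcov
  rw [SP_union] at hge
  have hup : finrank K ↥(SP K e (Finset.Ico i (m - j))) ≤ m - j - i :=
    le_trans (SP_le_card e _) (by rw [Nat.card_Ico])
  omega

lemma exists_opposite (A : Vx K V m) : ∃ B : Vx K V m, Phi A B = m.choose 2 := by
  -- choose an adapted family
  have hex : ∀ i : Fin m, ∃ x, x ∈ E m A.1 (i.val+1) ∧ x ∉ E m A.1 i.val := by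
    intro i
    have hfr1 : finrank K ↥(E m A.1 i.val) = i.val := E_finrank hdim A.2 hm (by omega)
    have hfr2 : finrank K ↥(E m A.1 (i.val+1)) = i.val + 1 :=
      E_finrank hdim A.2 hm (by omega)
    have hltE : E m A.1 i.val < E m A.1 (i.val+1) := by
      refine lt_of_le_of_ne (E_mono A.2 (Nat.le_succ _)) (fun h => ?_)
      rw [h, hfr2] at hfr1
      omega
    obtain ⟨x, hx1, hx2⟩ := SetLike.exists_of_lt hltE
    exact ⟨x, hx1, hx2⟩
  choose f hf using hex
  set e : ℕ → V := fun t => if h : t < m then f ⟨t, h⟩ else 0 with he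
  have heval : ∀ t (h : t < m), e t = f ⟨t, h⟩ := by
    intro t h; simp only [he, dif_pos h]
  -- partial spans recover the flag
  have pspan_eq : ∀ i, i ≤ m → SP K e (Finset.range i) = E m A.1 i := by
    intro i
    induction i with
    | zero =>
      intro _
      rw [E_zero]
      unfold SP
      rw [Finset.range_zero, Finset.coe_empty, Set.image_empty, Submodule.span_empty]
    | succ n ih =>
      intro hn
      have hihe := ih (by omega)
      have hstep : SP K e (Finset.range (n+1))
          = Submodule.span K {e n} ⊔ SP K e (Finset.range n) := by
        unfold SP
        rw [Finset.range_add_one, Finset.coe_insert, Set.image_insert_eq,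
          Submodule.span_insert]
      rw [hstep, hihe]
      have hmem : e n ∈ E m A.1 (n+1) := by
        rw [heval n (by omega)]
        exact (hf ⟨n, by omega⟩).1
      have hnmem : e n ∉ E m A.1 n := by
        rw [heval n (by omega)]
        exact (hf ⟨n, by omega⟩).2
      have hle : Submodule.span K {e n} ⊔ E m A.1 n ≤ E m A.1 (n+1) :=
        sup_le ((Submodule.span_singleton_le_iff_mem _ _).mpr hmem)
          (E_mono A.2 (Nat.le_succ _))
      have hltE : E m A.1 n < Submodule.span K {e n} ⊔ E m A.1 n := by
        refine lt_of_le_of_ne le_sup_right (fun h => hnmem ?_)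
        rw [h]
        exact Submodule.mem_sup_left (Submodule.mem_span_singleton_self _)
      have hfrlt : n < finrank K ↥(Submodule.span K {e n} ⊔ E m A.1 n) := by
        have hx := Submodule.finrank_lt_finrank_of_lt hltE
        rwa [E_finrank hdim A.2 hm (by omega)] at hx
      refine Submodule.eq_of_le_of_finrank_le hle ?_
      rw [E_finrank hdim A.2 hm hn]
      omega
  have hspan : SP K e (Finset.range m) = ⊤ := by
    rw [pspan_eq m le_rfl]
    exact E_top A.1 le_rfl hm
  -- the opposite flag
  have hBflag : IsCompleteFlagOf K m
      (fun t : Fin (m-1) => SP K e (Finset.Ico (m - (t.val+1)) m)) := by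
    constructor
    · intro t
      have htlt : t.val < m - 1 := t.isLt
      exact SP_Ico_dim hdim e hspan (by omega)
    · intro t t' htt'
      apply SP_mono
      apply Finset.Ico_subset_Ico _ le_rfl
      have := Fin.le_def.mp htt'
      omega
  set B : Vx K V m := ⟨_, hBflag⟩ with hB
  have hEB : ∀ j, j ≤ m → E m B.1 j = SP K e (Finset.Ico (m - j) m) := by
    intro j hj
    rcases Nat.eq_zero_or_pos j with h0 | h0
    · subst h0
      rw [E_zero, Nat.sub_zero, Finset.Ico_self]
      unfold SP
      rw [Finset.coe_empty, Set.image_empty, Submodule.span_empty]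
    rcases le_or_gt j (m-1) with h1 | h1
    · rw [E_mid _ h0 h1]
      show SP K e (Finset.Ico (m - (j-1+1)) m) = SP K e (Finset.Ico (m - j) m)
      rw [show j - 1 + 1 = j by omega]
    · have hjm : j = m := by omega
      subst hjm
      rw [E_top _ le_rfl hm, Nat.sub_self, ← Finset.range_eq_Ico, hspan]
  have hdm : ∀ i j, i ≤ m → j ≤ m → dm A B i j = if m ≤ i + j then i + j - m else 0 := by
    intro i j hi hj
    have hrw : dm A B i j
        = finrank K ↥(SP K e (Finset.range i) ⊓ SP K e (Finset.Ico (m-j) m)) := by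
      rw [dm, pspan_eq i hi, hEB j hj]
    rw [hrw]
    split_ifs with h
    · exact SP_inf_dim_big hdim e hspan hi hj h
    · exact SP_inf_dim_small hdim e hspan (by omega)
  have hjmpAB : ∀ i, 1 ≤ i → i ≤ m → jmp A B i = m + 1 - i := by
    intro i h1 h2
    apply jmp_eq_of
    · rw [hdm i (m+1-i) h2 (by omega), hdm (i-1) (m+1-i) (by omega) (by omega),
        if_pos (by omega), if_pos (by omega)]
      omega
    · intro x hx
      rw [hdm i x h2 (by omega), hdm (i-1) x (by omega) (by omega)]
      split_ifs <;> omega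
  have hjmpBA : ∀ j, 1 ≤ j → j ≤ m → jmp B A j = m + 1 - j := by
    intro j h1 h2
    apply jmp_eq_of
    · rw [dm_comm B A j (m+1-j), dm_comm B A (j-1) (m+1-j),
        hdm (m+1-j) j (by omega) h2, hdm (m+1-j) (j-1) (by omega) (by omega),
        if_pos (by omega), if_pos (by omega)]
      omega
    · intro x hx
      rw [dm_comm B A j x, dm_comm B A (j-1) x,
        hdm x j (by omega) h2, hdm x (j-1) (by omega) (by omega)]
      split_ifs <;> omega
  refine ⟨B, ?_⟩
  have hPhi : Phi A B = ∑ i ∈ Icc 1 m, (m - i) := by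
    unfold Phi
    apply Finset.sum_congr rfl
    intro i hi
    simp only [Finset.mem_Icc] at hi
    rw [← count_le (m - i) m (by omega)]
    apply Finset.sum_congr rfl
    intro j hj
    simp only [Finset.mem_Icc] at hj
    rw [hjmpAB i hi.1 hi.2, hjmpBA j hj.1 hj.2]
    exact if_congr (by omega) rfl rfl
  rw [hPhi, gauss_sum]

lemma vertex_nonempty : Nonempty (Vx K V m) := by
  have b := Module.finBasis K V
  set e : ℕ → V := fun t => if h : t < finrank K V then b ⟨t, h⟩ else 0 with he
  have hspan : SP K e (Finset.range m) = ⊤ := by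
    rw [eq_top_iff, ← b.span_eq]
    apply Submodule.span_mono
    rintro x ⟨i, rfl⟩
    have him : i.val < m := by have := i.isLt; omega
    refine ⟨i.val, by simpa using him, ?_⟩
    rw [he]
    simp only [dif_pos i.isLt]
  refine ⟨⟨fun t => SP K e (Finset.range (t.val+1)), ?_, ?_⟩⟩
  · intro t
    have htlt : t.val < m - 1 := t.isLt
    exact SP_range_dim hdim e hspan (by omega)
  · intro t t' h
    exact SP_mono e (Finset.range_subset_range.mpr (by have := Fin.le_def.mp h; omega))

end Mat

/-- for an `m`-dimensional vector space `V` over a field `K` (`m ≥ 2`),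
the flag graph is connected and every vertex has eccentricity exactly `m(m-1)/2`;
in particular the diameter and the radius both equal `m.choose 2`. -/
theorem flagGraph_connected_and_eccentricity (K : Type*) [Field K] (V : Type*)
    [AddCommGroup V] [Module K V] (m : ℕ) (hm : 2 ≤ m)
    (hdim : Module.finrank K V = m) :
    (flagGraphOf K V m).Connected ∧
    (∀ v, (⨆ w, (flagGraphOf K V m).edist v w) = ((m * (m-1) / 2 : ℕ) : ℕ∞)) ∧
    (flagGraphOf K V m).ediam = ((Nat.choose m 2 : ℕ) : ℕ∞) ∧
    (⨅ v, ⨆ w, (flagGraphOf K V m).edist v w) = ((Nat.choose m 2 : ℕ) : ℕ∞) := by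
  haveI : FiniteDimensional K V := FiniteDimensional.of_finrank_pos (by omega)
  obtain ⟨A0⟩ : Nonempty (Vx K V m) := vertex_nonempty hdim hm
  haveI : Nonempty (Vx K V m) := ⟨A0⟩
  have hup : ∀ A B : Vx K V m, ∃ w : (flagGraphOf K V m).Walk A B, w.length ≤ m.choose 2 :=
    fun A B => exists_walk_le hdim hm (m.choose 2) A B (Phi_le_choose hdim hm A B)
  have hedist_le : ∀ A B : Vx K V m,
      (flagGraphOf K V m).edist A B ≤ ((m.choose 2 : ℕ) : ℕ∞) := by
    intro A B
    obtain ⟨w, hw⟩ := hup A B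
    exact le_trans (SimpleGraph.Walk.edist_le w) (by exact_mod_cast hw)
  have hreach : ∀ A B : Vx K V m, (flagGraphOf K V m).Reachable A B :=
    fun A B => ⟨(hup A B).choose⟩
  have hlow : ∀ A : Vx K V m, ∃ B, ((m.choose 2 : ℕ) : ℕ∞) ≤ (flagGraphOf K V m).edist A B := by
    intro A
    obtain ⟨B, hB⟩ := exists_opposite hdim hm A
    refine ⟨B, ?_⟩
    have hne : (flagGraphOf K V m).edist A B ≠ ⊤ := by
      intro h
      have := hedist_le A B
      rw [h] at this
      simp at this
    obtain ⟨p, hp⟩ := SimpleGraph.exists_walk_of_edist_ne_top hne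
    rw [← hp]
    have hl := Phi_le_length hdim hm p
    rw [hB] at hl
    exact_mod_cast hl
  have hecc : ∀ A : Vx K V m,
      (⨆ B, (flagGraphOf K V m).edist A B) = ((m.choose 2 : ℕ) : ℕ∞) := by
    intro A
    apply le_antisymm (iSup_le (fun B => hedist_le A B))
    obtain ⟨B, hB⟩ := hlow A
    exact le_trans hB (le_iSup _ B)
  refine ⟨SimpleGraph.Connected.mk (fun u v => hreach u v), ?_, ?_, ?_⟩
  · intro v
    rw [hecc v, Nat.choose_two_right]
  · apply le_antisymm
    · exact SimpleGraph.ediam_le_of_edist_le (fun u v => hedist_le u v)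
    · obtain ⟨B, hB⟩ := hlow A0
      exact le_trans hB SimpleGraph.edist_le_ediam
  · simp only [hecc]
    exact iInf_const

end NCPaper
end

section
/- For every n ≥ 1 the lattice NCP_n is supersolvable. In fact, the maximal chain d = (π_0 < π_1 < ⋯ < π_{n−1}), where π_0 is the partition into singletons and for k ≥ 1 the partition π_k has unique non-singleton block {1,2,…,k+1}, is an M-chain: for every chain c of NCP_n, the sublattice of NCP_n generated by c ∪ d is distributive. -/
namespace NCPaper

/-- A partition (setoid) of `Fin n` is noncrossing if there are no indices
`a < b < c < d` with `a, c` in one block and `b, d` in a different block;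
equivalently, crossing pairs must lie in the same block. -/
def IsNoncrossing {m : ℕ} (P : Setoid (Fin m)) : Prop :=
  ∀ a b c d : Fin m, a < b → b < c → c < d → P a c → P b d → P a b

/-- The noncrossing partitions of `{1, …, n}`, ordered by refinement. -/
def NCP (n : ℕ) : Type := {P : Setoid (Fin n) // IsNoncrossing P}

instance (n : ℕ) : PartialOrder (NCP n) :=
  Subtype.partialOrder _

/-- A subset of a poset is closed under (binary) joins and meets of the ambient poset. -/
def LatClosed {α : Type*} [PartialOrder α] (L : Set α) : Prop :=
  (∀ x ∈ L, ∀ y ∈ L, ∀ z, IsLUB {x, y} z → z ∈ L) ∧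
  (∀ x ∈ L, ∀ y ∈ L, ∀ z, IsGLB {x, y} z → z ∈ L)

/-- The distributive law `x ⊓ (y ⊔ z) = (x ⊓ y) ⊔ (x ⊓ z)` holds among elements of `L`,
expressed via least upper bounds and greatest lower bounds of the ambient poset. -/
def DistribOn {α : Type*} [PartialOrder α] (L : Set α) : Prop :=
  ∀ x ∈ L, ∀ y ∈ L, ∀ z ∈ L, ∀ a b p q r : α,
    IsLUB {y, z} a → IsGLB {x, a} b → IsGLB {x, y} p → IsGLB {x, z} q →
    IsLUB {p, q} r → b = r

/-- A finite lattice (here: poset) is supersolvable if it has an M-chain: a maximal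
chain `D` such that for every chain `C` the sublattice generated by `C ∪ D` is
distributive. -/
def SupersolvablePoset (α : Type*) [PartialOrder α] : Prop :=
  ∃ D : Set α, IsMaxChain (· ≤ ·) D ∧
    ∀ C : Set α, IsChain (· ≤ ·) C →
      ∃ L : Set α, C ∪ D ⊆ L ∧ LatClosed L ∧ DistribOn L

/-- The `k`-th element of the distinguished chain: the partition whose unique
non-singleton block is `{0, 1, …, k}` (i.e. `{1, …, k+1}` in 1-indexed notation). -/
def dSetoid (n k : ℕ) : Setoid (Fin n) :=
  Setoid.ker (fun i : Fin n => if i.val ≤ k then 0 else i.val)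

lemma dSetoid_noncrossing (n k : ℕ) : IsNoncrossing (dSetoid n k) := by
  rintro a b c d hab hbc hcd hac hbd
  have hab' : a.val < b.val := hab
  have hbc' : b.val < c.val := hbc
  have hac' : (if a.val ≤ k then 0 else a.val) = (if c.val ≤ k then 0 else c.val) := hac
  show (if a.val ≤ k then 0 else a.val) = (if b.val ≤ k then 0 else b.val)
  split_ifs at hac' ⊢ <;> omega

/-- The distinguished maximal chain of `NCP n`. -/
def dChain (n : ℕ) (k : Fin n) : NCP n :=
  ⟨dSetoid n k.val, dSetoid_noncrossing n k.val⟩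


/-! ### Auxiliary development -/

variable {n : ℕ}

lemma NCP.le_iff {x y : NCP n} : x ≤ y ↔ ∀ ⦃a b⦄, x.val a b → y.val a b := Iff.rfl

lemma NCP.ext' {x y : NCP n} (h : ∀ a b, x.val a b ↔ y.val a b) : x = y :=
  Subtype.ext (Setoid.ext h)

def topN (n : ℕ) : NCP n :=
  ⟨⟨fun _ _ => True, ⟨fun _ => trivial, fun _ => trivial, fun _ _ => trivial⟩⟩,
    fun _ _ _ _ _ _ _ _ _ => trivial⟩

def botN (n : ℕ) : NCP n :=
  ⟨⟨Eq, eq_equivalence⟩, by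
    intro a b c d hab hbc hcd hac hbd
    have : a = c := hac
    exact absurd (this ▸ (hab.trans hbc)) (lt_irrefl _)⟩

lemma botN_rel {a b : Fin n} : (botN n).val a b ↔ a = b := Iff.rfl
lemma topN_rel {a b : Fin n} : (topN n).val a b ↔ True := Iff.rfl

lemma botN_le (x : NCP n) : botN n ≤ x := by
  intro a b h
  exact (botN_rel.1 h) ▸ x.val.refl a

lemma le_topN (x : NCP n) : x ≤ topN n := fun _ _ _ => trivial

/-- the meet of all partitions satisfying `p`. -/
def meetAll (p : NCP n → Prop) : NCP n :=
  ⟨⟨fun a b => ∀ P, p P → P.val a b,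
    ⟨fun a P _ => P.val.refl a, fun h P hP => P.val.symm (h P hP),
      fun h h' P hP => P.val.trans (h P hP) (h' P hP)⟩⟩, by
    intro a b c d hab hbc hcd hac hbd P hP
    exact P.prop a b c d hab hbc hcd (hac P hP) (hbd P hP)⟩

lemma isGLB_pair (x y : NCP n) : IsGLB {x, y} (meetAll (fun P => P = x ∨ P = y)) := by
  constructor
  · rintro z (rfl | rfl)
    · exact fun a b h => h z (Or.inl rfl)
    · intro a b h
      exact h z (Or.inr (by simp))
  · intro w hw a b h P hP
    rcases hP with rfl | rfl
    · exact hw (by simp) h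
    · exact hw (by simp) h

lemma isLUB_pair (x y : NCP n) : IsLUB {x, y} (meetAll (fun P => x ≤ P ∧ y ≤ P)) := by
  constructor
  · rintro z (rfl | rfl) <;> intro a b h P hP
    · exact hP.1 h
    · exact hP.2 h
  · intro w hw a b h
    exact h w ⟨hw (by simp), hw (by simp)⟩

/-! ### the minimum of a block -/

noncomputable def blockFinset (R : NCP n) (a : Fin n) : Finset (Fin n) :=
  @Finset.filter _ (fun w => R.val a w) (Classical.decPred _) Finset.univ

lemma mem_blockFinset {R : NCP n} {a w : Fin n} : w ∈ blockFinset R a ↔ R.val a w := by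
  rw [blockFinset, @Finset.mem_filter _ _ (Classical.decPred _)]
  simp

lemma blockFinset_nonempty (R : NCP n) (a : Fin n) : (blockFinset R a).Nonempty :=
  ⟨a, mem_blockFinset.2 (R.val.refl a)⟩

noncomputable def mu (R : NCP n) (a : Fin n) : Fin n :=
  (blockFinset R a).min' (blockFinset_nonempty R a)

lemma mu_rel (R : NCP n) (a : Fin n) : R.val a (mu R a) :=
  mem_blockFinset.1 (Finset.min'_mem _ _)

lemma mu_min (R : NCP n) {a w : Fin n} (h : R.val a w) : mu R a ≤ w :=
  Finset.min'_le _ w (mem_blockFinset.2 h)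

lemma mu_le (R : NCP n) (a : Fin n) : mu R a ≤ a := mu_min R (R.val.refl a)

lemma mu_congr (R : NCP n) {a b : Fin n} (h : R.val a b) : mu R a = mu R b := by
  have h1 : mu R a ≤ mu R b := mu_min R (R.val.trans h (mu_rel R b))
  have h2 : mu R b ≤ mu R a := mu_min R (R.val.trans (R.val.symm h) (mu_rel R a))
  exact le_antisymm h1 h2

lemma mu_anti {R S : NCP n} (h : R ≤ S) (a : Fin n) : mu S a ≤ mu R a :=
  mu_min S (h (mu_rel R a))

lemma mu_botN (a : Fin n) : mu (botN n) a = a :=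
  le_antisymm (mu_le _ a) (le_of_eq (botN_rel.1 (mu_rel (botN n) a)))

/-! ### join with a prefix partition, as a relation -/

def Jrel (R : NCP n) (t : ℕ) (a b : Fin n) : Prop :=
  R.val a b ∨ ((mu R a).val ≤ t ∧ (mu R b).val ≤ t)

lemma Jrel.refl (R : NCP n) (t : ℕ) (a : Fin n) : Jrel R t a a := Or.inl (R.val.refl a)

lemma Jrel.symm {R : NCP n} {t : ℕ} {a b : Fin n} (h : Jrel R t a b) : Jrel R t b a := by
  rcases h with h | h
  · exact Or.inl (R.val.symm h)
  · exact Or.inr ⟨h.2, h.1⟩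

lemma Jrel.trans {R : NCP n} {t : ℕ} {a b c : Fin n}
    (h : Jrel R t a b) (h' : Jrel R t b c) : Jrel R t a c := by
  rcases h with h | h <;> rcases h' with h' | h'
  · exact Or.inl (R.val.trans h h')
  · exact Or.inr ⟨(mu_congr R h) ▸ h'.1, h'.2⟩
  · exact Or.inr ⟨h.1, (mu_congr R h') ▸ h.2⟩
  · exact Or.inr ⟨h.1, h'.2⟩

lemma Jrel.mono {R : NCP n} {t t' : ℕ} (htt : t ≤ t') {a b : Fin n}
    (h : Jrel R t a b) : Jrel R t' a b := by
  rcases h with h | h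
  · exact Or.inl h
  · exact Or.inr ⟨h.1.trans htt, h.2.trans htt⟩

lemma Jrel_zero {R : NCP n} {a b : Fin n} : Jrel R 0 a b ↔ R.val a b := by
  constructor
  · rintro (h | ⟨h1, h2⟩)
    · exact h
    · have : mu R a = mu R b := Fin.ext (by omega)
      exact R.val.trans (mu_rel R a) (this ▸ R.val.symm (mu_rel R b))
  · exact Or.inl

lemma Jrel_noncrossing (R : NCP n) (t : ℕ) (a b c d : Fin n)
    (hab : a < b) (hbc : b < c) (hcd : c < d)
    (hac : Jrel R t a c) (hbd : Jrel R t b d) : Jrel R t a b := by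
  rcases hac with hac | hac <;> rcases hbd with hbd | hbd
  · exact Or.inl (R.prop a b c d hab hbc hcd hac hbd)
  · -- R a c, mins of b, d small
    by_cases hma : (mu R a).val ≤ t
    · exact Or.inr ⟨hma, hbd.1⟩
    · exfalso
      set e := mu R b with he
      have heb : R.val e b := R.val.symm (mu_rel R b)
      have h1 : e < a := by
        have : (mu R a).val ≤ a.val := mu_le R a
        have : e.val < (mu R a).val := by omega
        have h2 : (mu R a).val ≤ a.val := mu_le R a
        exact Fin.lt_def.2 (by omega)
      have hea : R.val e a := R.prop e a b c h1 hab hbc heb hac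
      have : mu R a = mu R e := mu_congr R (R.val.symm hea)
      have : (mu R a).val ≤ e.val := this ▸ (mu_le R e)
      omega
  · by_cases hmb : (mu R b).val ≤ t
    · exact Or.inr ⟨hac.1, hmb⟩
    · exfalso
      set e := mu R c with he
      have hec : R.val e c := R.val.symm (mu_rel R c)
      have h1 : e < b := by
        have : (mu R b).val ≤ b.val := mu_le R b
        exact Fin.lt_def.2 (by omega)
      have heb : R.val e b := R.prop e b c d h1 hbc hcd hec hbd
      have : mu R b = mu R e := mu_congr R (R.val.symm heb)
      have : (mu R b).val ≤ e.val := this ▸ (mu_le R e)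
      omega
  · exact Or.inr ⟨hac.1, hbd.1⟩

/-! ### the normal forms -/

def Gs (C' : Set (NCP n)) (f : NCP n → ℕ) : NCP n :=
  ⟨⟨fun a b => ∀ R ∈ C', Jrel R (f R) a b,
    ⟨fun a R _ => Jrel.refl R _ a, fun h R hR => (h R hR).symm,
      fun h h' R hR => (h R hR).trans (h' R hR)⟩⟩, by
    intro a b c d hab hbc hcd hac hbd R hR
    exact Jrel_noncrossing R (f R) a b c d hab hbc hcd (hac R hR) (hbd R hR)⟩

lemma Gs_rel {C' : Set (NCP n)} {f : NCP n → ℕ} {a b : Fin n} :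
    (Gs C' f).val a b ↔ ∀ R ∈ C', Jrel R (f R) a b := Iff.rfl

def Good (C' : Set (NCP n)) (f : NCP n → ℕ) : Prop :=
  ∀ R ∈ C', ∀ S ∈ C', R ≤ S → f S ≤ f R

lemma Gs_mono {C' : Set (NCP n)} {f g : NCP n → ℕ} (h : f ≤ g) : Gs C' f ≤ Gs C' g :=
  fun _ _ hab R hR => Jrel.mono (h R) (hab R hR)

lemma isGLB_Gs (C' : Set (NCP n)) (f g : NCP n → ℕ) :
    IsGLB {Gs C' f, Gs C' g} (Gs C' (f ⊓ g)) := by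
  constructor
  · rintro z (rfl | rfl)
    · exact Gs_mono (fun R => inf_le_left)
    · exact Gs_mono (fun R => inf_le_right)
  · intro w hw a b h R hR
    have h1' : (Gs C' f).val a b := hw (Set.mem_insert _ _) h
    have h2' : (Gs C' g).val a b := hw (by simp) h
    have h1 := h1' R hR
    have h2 := h2' R hR
    rcases h1 with h1 | h1
    · exact Or.inl h1
    · rcases h2 with h2 | h2
      · exact Or.inl h2
      · exact Or.inr ⟨le_inf h1.1 h2.1, le_inf h1.2 h2.2⟩

instance : Finite (NCP n) := by
  have h1 : Finite (Setoid (Fin n)) :=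
    Finite.of_injective (fun s : Setoid (Fin n) => ⇑s)
      (fun s t h => Setoid.eq_iff_rel_eq.2 h)
  exact Subtype.finite

lemma exists_min_of_chain {s : Set (NCP n)} (hne : s.Nonempty) :
    ∃ m ∈ s, ∀ x ∈ s, x ≤ m → m = x :=
  by
    obtain ⟨m, hm, hmin⟩ := Set.Finite.exists_minimalFor id s s.toFinite hne
    exact ⟨m, hm, fun x hx hxm => le_antisymm (hmin hx hxm) hxm⟩

lemma exists_max_of_chain {s : Set (NCP n)} (hne : s.Nonempty) :
    ∃ m ∈ s, ∀ x ∈ s, m ≤ x → m = x :=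
  by
    obtain ⟨m, hm, hmax⟩ := Set.Finite.exists_maximalFor id s s.toFinite hne
    exact ⟨m, hm, fun x hx hmx => le_antisymm hmx (hmax hx hmx)⟩

lemma walk (C' : Set (NCP n)) (hch : IsChain (· ≤ ·) C')
    (f g : NCP n → ℕ) (hf : Good C' f) (hg : Good C' g) (U : NCP n)
    (hUf : Gs C' f ≤ U) (hUg : Gs C' g ≤ U) :
    ∀ N : ℕ, ∀ a : Fin n, a.val ≤ N → ∀ j ∈ C',
      (∀ R ∈ C', R < j → (mu R a).val ≤ f R ⊔ g R) → U.val a (mu j a) := by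
  intro N
  induction N with
  | zero =>
    intro a haN j hj _
    have h1 : mu j a ≤ a := mu_le j a
    have h2 : (mu j a).val ≤ a.val := h1
    have : mu j a = a := Fin.ext (by omega)
    rw [this]
  | succ N IH =>
    intro a haN j hj hyp
    by_cases heq : mu j a = a
    · rw [heq]
    · have hlt : (mu j a).val < a.val :=
        lt_of_le_of_ne (mu_le j a) (fun h => heq (Fin.ext h))
      set s := {R | R ∈ C' ∧ (mu R a).val < a.val} with hs
      have hsne : s.Nonempty := ⟨j, hj, hlt⟩
      obtain ⟨j₁, hj₁s, hj₁min⟩ := exists_min_of_chain hsne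
      obtain ⟨hj₁C, hj₁lt⟩ := hj₁s
      have hminfact : ∀ R ∈ C', R < j₁ → mu R a = a := by
        intro R hR hRlt
        by_contra hne
        have hRs : R ∈ s := ⟨hR, lt_of_le_of_ne (mu_le R a) (fun h => hne (Fin.ext h))⟩
        have := hj₁min R hRs (le_of_lt hRlt)
        exact absurd (this ▸ hRlt) (lt_irrefl _)
      have hj₁j : j₁ ≤ j := by
        rcases eq_or_ne j₁ j with rfl | hne
        · exact le_rfl
        rcases hch.total hj₁C hj with h | h
        · exact h
        · exact absurd (hj₁min j ⟨hj, hlt⟩ h) hne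
      set a₁ := mu j₁ a with ha₁
      have ha₁lt : a₁.val < a.val := hj₁lt
      have key : (∀ R ∈ C', R < j₁ → a.val ≤ f R) ∨ (∀ R ∈ C', R < j₁ → a.val ≤ g R) := by
        by_cases hjbot : ∀ R ∈ C', ¬ R < j₁
        · exact Or.inl (fun R hR hRlt => absurd hRlt (hjbot R hR))
        · push_neg at hjbot
          obtain ⟨R₀, hR₀C, hR₀lt⟩ := hjbot
          obtain ⟨P, hPs, hPmax⟩ := exists_max_of_chain (s := {R | R ∈ C' ∧ R < j₁}) ⟨R₀, hR₀C, hR₀lt⟩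
          obtain ⟨hPC, hPlt⟩ := hPs
          have hPa : mu P a = a := hminfact P hPC hPlt
          have hPj : P < j := lt_of_lt_of_le hPlt hj₁j
          have hPv : a.val ≤ f P ⊔ g P := by
            have := hyp P hPC hPj
            rwa [hPa] at this
          have hRP : ∀ R ∈ C', R < j₁ → R ≤ P := by
            intro R hR hRlt
            rcases hch.total hR hPC with h | h
            · exact h
            · exact (hPmax R ⟨hR, hRlt⟩ h) ▸ le_rfl
          rcases le_sup_iff.1 hPv with h | h
          · exact Or.inl (fun R hR hRlt => h.trans (hf R hR P hPC (hRP R hR hRlt)))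
          · exact Or.inr (fun R hR hRlt => h.trans (hg R hR P hPC (hRP R hR hRlt)))
      have hstep : U.val a a₁ := by
        have main : ∀ (h : NCP n → ℕ), (∀ R ∈ C', R < j₁ → a.val ≤ h R) →
            (Gs C' h).val a a₁ := by
          intro h hkey R hR
          by_cases hcase : j₁ ≤ R
          · exact Or.inl (hcase (mu_rel j₁ a))
          · have hRlt : R < j₁ := by
              rcases hch.total hj₁C hR with hc | hc
              · exact absurd hc hcase
              · exact lt_of_le_of_ne hc (fun e => hcase (e ▸ le_rfl))
            · have h1 : (mu R a).val ≤ h R := by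
                rw [hminfact R hR hRlt]; exact hkey R hR hRlt
              have h2 : (mu R a₁).val ≤ h R := by
                have := (mu_le R a₁ : (mu R a₁).val ≤ a₁.val)
                have := hkey R hR hRlt
                omega
              exact Or.inr ⟨h1, h2⟩
        rcases key with key | key
        · exact hUf (main f key)
        · exact hUg (main g key)
      have hyp₁ : ∀ R ∈ C', R < j → (mu R a₁).val ≤ f R ⊔ g R := by
        intro R hR hRj
        by_cases hcase : j₁ ≤ R
        · have hrel : R.val a a₁ := hcase (mu_rel j₁ a)
          rw [← mu_congr R hrel]
          exact hyp R hR hRj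
        · have hRlt : R < j₁ := by
            rcases hch.total hj₁C hR with hc | hc
            · exact absurd hc hcase
            · exact lt_of_le_of_ne hc (fun e => hcase (e ▸ le_rfl))
          have h1 : mu R a = a := hminfact R hR hRlt
          have h2 := hyp R hR hRj
          rw [h1] at h2
          have := (mu_le R a₁ : (mu R a₁).val ≤ a₁.val)
          omega
      have hrec : U.val a₁ (mu j a₁) := IH a₁ (by omega) j hj hyp₁
      have hmm : mu j a₁ = mu j a := by
        have hrel : j.val a a₁ := hj₁j (mu_rel j₁ a)
        exact (mu_congr j hrel).symm
      exact U.val.trans hstep (hmm ▸ hrec)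

lemma isLUB_Gs (C' : Set (NCP n)) (hch : IsChain (· ≤ ·) C') (htop : topN n ∈ C')
    (f g : NCP n → ℕ) (hf : Good C' f) (hg : Good C' g) :
    IsLUB {Gs C' f, Gs C' g} (Gs C' (f ⊔ g)) := by
  constructor
  · rintro z (rfl | rfl)
    · exact Gs_mono (fun R => le_sup_left)
    · exact Gs_mono (fun R => le_sup_right)
  · intro U hU a b hab
    have hUf : Gs C' f ≤ U := hU (Set.mem_insert _ _)
    have hUg : Gs C' g ≤ U := hU (by simp)
    rcases eq_or_ne a b with rfl | hne
    · exact U.val.refl a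
    · set s := {R | R ∈ C' ∧ R.val a b} with hs
      have hsne : s.Nonempty := ⟨topN n, htop, trivial⟩
      obtain ⟨i₀, hi₀s, hi₀min⟩ := exists_min_of_chain hsne
      obtain ⟨hi₀C, hi₀ab⟩ := hi₀s
      have hyp : ∀ c : Fin n, (∀ R ∈ C', R < i₀ → (mu R c).val ≤ f R ⊔ g R) →
          U.val c (mu i₀ c) := fun c h => walk C' hch f g hf hg U hUf hUg c.val c le_rfl i₀ hi₀C h
      have hbase : ∀ R ∈ C', R < i₀ →
          (mu R a).val ≤ f R ⊔ g R ∧ (mu R b).val ≤ f R ⊔ g R := by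
        intro R hR hRlt
        have hnab : ¬ R.val a b := by
          intro hab'
          exact absurd (hi₀min R ⟨hR, hab'⟩ (le_of_lt hRlt) ▸ hRlt) (lt_irrefl _)
        rcases hab R hR with h | h
        · exact absurd h hnab
        · exact h
      have hwa : U.val a (mu i₀ a) := hyp a (fun R hR hRlt => (hbase R hR hRlt).1)
      have hwb : U.val b (mu i₀ b) := hyp b (fun R hR hRlt => (hbase R hR hRlt).2)
      have hmm : mu i₀ a = mu i₀ b := mu_congr i₀ hi₀ab
      exact U.val.trans hwa (hmm ▸ U.val.symm hwb)

/-! ### representation of generators -/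

lemma dChain_rel {j a b : Fin n} :
    (dChain n j).val a b ↔ (a = b ∨ (a.val ≤ j.val ∧ b.val ≤ j.val)) := by
  show (if a.val ≤ j.val then 0 else a.val) = (if b.val ≤ j.val then 0 else b.val) ↔ _
  constructor
  · intro h
    split_ifs at h with h1 h2
    · exact Or.inr ⟨h1, h2⟩
    · omega
    · omega
    · exact Or.inl (Fin.ext h)
  · rintro (rfl | ⟨h1, h2⟩)
    · rfl
    · simp [h1, h2]

lemma repr_mem_chain (C' : Set (NCP n)) {R₀ : NCP n} (hR₀ : R₀ ∈ C') :
    ∃ f : NCP n → ℕ, Good C' f ∧ Gs C' f = R₀ := by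
  classical
  refine ⟨fun R => if R₀ ≤ R then 0 else n - 1, ?_, ?_⟩
  · intro R hR S hS hRS
    by_cases h1 : R₀ ≤ S
    · simp [h1]
    · have h2 : ¬ R₀ ≤ R := fun hc => h1 (hc.trans hRS)
      simp [h1, h2]
  · apply NCP.ext'
    intro a b
    constructor
    · intro h
      have h2 : Jrel R₀ 0 a b := by simpa using h R₀ hR₀
      exact Jrel_zero.1 h2
    · intro h R hR
      by_cases hcase : R₀ ≤ R
      · have : Jrel R 0 a b := Jrel_zero.2 (hcase h)
        simpa [hcase] using this
      · have h1 : (mu R a).val ≤ n - 1 := by have := (mu R a).isLt; omega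
        have h2 : (mu R b).val ≤ n - 1 := by have := (mu R b).isLt; omega
        have : Jrel R (n - 1) a b := Or.inr ⟨h1, h2⟩
        simpa [hcase] using this

lemma repr_mem_dchain {C' : Set (NCP n)} (hbot : botN n ∈ C') (j : Fin n) :
    ∃ f : NCP n → ℕ, Good C' f ∧ Gs C' f = dChain n j := by
  refine ⟨fun _ => j.val, fun _ _ _ _ _ => le_rfl, ?_⟩
  apply NCP.ext'
  intro a b
  constructor
  · intro h
    have hb : Jrel (botN n) j.val a b := h (botN n) hbot
    rcases hb with hb | hb
    · exact dChain_rel.2 (Or.inl (botN_rel.1 hb))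
    · rw [mu_botN, mu_botN] at hb
      exact dChain_rel.2 (Or.inr hb)
  · intro h R hR
    show Jrel R j.val a b
    rcases dChain_rel.1 h with rfl | ⟨h1, h2⟩
    · exact Jrel.refl R _ a
    · refine Or.inr ⟨?_, ?_⟩
      · have := (mu_le R a : (mu R a).val ≤ a.val); omega
      · have := (mu_le R b : (mu R b).val ≤ b.val); omega

/-! ### the distinguished chain is maximal -/

lemma dChain_mono {j k : Fin n} (h : j ≤ k) : dChain n j ≤ dChain n k := by
  intro a b hab
  rcases dChain_rel.1 hab with rfl | ⟨h1, h2⟩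
  · exact (dChain n k).val.refl a
  · have hjk : j.val ≤ k.val := h
    exact dChain_rel.2 (Or.inr ⟨h1.trans hjk, h2.trans hjk⟩)

lemma dChain_zero (hn : 1 ≤ n) : dChain n ⟨0, hn⟩ = botN n := by
  apply NCP.ext'
  intro a b
  rw [dChain_rel, botN_rel]
  constructor
  · rintro (rfl | ⟨h1, h2⟩)
    · rfl
    · have h1' : a.val ≤ 0 := h1
      have h2' : b.val ≤ 0 := h2
      exact Fin.ext (by omega)
  · rintro rfl; exact Or.inl rfl

lemma dChain_last (hn : 1 ≤ n) : dChain n ⟨n - 1, by omega⟩ = topN n := by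
  apply NCP.ext'
  intro a b
  rw [dChain_rel, topN_rel]
  simp only [iff_true]
  exact Or.inr ⟨(by have := a.isLt; omega : a.val ≤ n - 1), (by have := b.isLt; omega : b.val ≤ n - 1)⟩

lemma dChain_maxChain (hn : 1 ≤ n) : IsMaxChain (· ≤ ·) (Set.range (dChain n)) := by
  constructor
  · rintro x ⟨j, rfl⟩ y ⟨k, rfl⟩ _
    rcases le_total j k with h | h
    · exact Or.inl (dChain_mono h)
    · exact Or.inr (dChain_mono h)
  · intro t htc hsub
    refine Set.Subset.antisymm hsub ?_
    intro x hx
    set S := {j : Fin n | dChain n j ≤ x} with hS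
    have h0 : (⟨0, hn⟩ : Fin n) ∈ S := by
      rw [hS, Set.mem_setOf_eq, dChain_zero hn]
      exact botN_le x
    obtain ⟨js, hjsS, hjsmax'⟩ := Set.Finite.exists_maximalFor id S S.toFinite ⟨_, h0⟩
    have hjsmax : ∀ j ∈ S, js ≤ j → js = j := fun j hj h => le_antisymm h (hjsmax' hj h)
    have hjsx : dChain n js ≤ x := hjsS
    by_cases hlast : js.val = n - 1
    · have : dChain n js = topN n := by
        have : js = ⟨n - 1, by omega⟩ := Fin.ext hlast
        rw [this]; exact dChain_last hn
      have hx1 : x ≤ dChain n js := this ▸ le_topN x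
      exact ⟨js, le_antisymm hjsx hx1⟩
    · have hjslt : js.val + 1 < n := by have := js.isLt; omega
      set j1 : Fin n := ⟨js.val + 1, hjslt⟩ with hj1
      have hj1v : j1.val = js.val + 1 := rfl
      have hnot : ¬ dChain n j1 ≤ x := by
        intro hle
        have hjslt2 : js < j1 := by rw [hj1]; exact Fin.lt_def.2 (by simp)
        have heq : js = j1 := hjsmax j1 hle (le_of_lt hjslt2)
        rw [heq] at hjslt2
        exact lt_irrefl _ hjslt2
      have hne : x ≠ dChain n j1 := by
        rintro rfl; exact hnot le_rfl
      have hxle : x ≤ dChain n j1 := by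
        rcases htc.total hx (hsub ⟨j1, rfl⟩) with h | h
        · exact h
        · exact absurd h hnot
      by_cases hex : ∃ w : Fin n, w.val ≤ js.val ∧ x.val w j1
      · obtain ⟨w, hw, hxw⟩ := hex
        have hall : ∀ u : Fin n, u.val ≤ js.val + 1 → x.val u j1 := by
          intro u hu
          rcases eq_or_ne u j1 with rfl | hune
          · exact x.val.refl _
          · have hu' : u.val ≤ js.val := by
              have : u.val ≠ js.val + 1 := fun h => hune (Fin.ext h)
              omega
            have h1 : x.val u w := hjsx (dChain_rel.2 (Or.inr ⟨hu', hw⟩))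
            exact x.val.trans h1 hxw
        refine ⟨j1, ?_⟩
        apply NCP.ext'
        intro a b
        constructor
        · intro h
          rcases dChain_rel.1 h with rfl | ⟨h1, h2⟩
          · exact x.val.refl a
          · exact x.val.trans (hall a h1) (x.val.symm (hall b h2))
        · intro h
          exact hxle h
      · push_neg at hex
        refine ⟨js, ?_⟩
        apply NCP.ext'
        intro a b
        constructor
        · intro h
          rcases dChain_rel.1 h with rfl | ⟨h1, h2⟩
          · exact x.val.refl a
          · exact hjsx (dChain_rel.2 (Or.inr ⟨h1, h2⟩))
        · intro h
          rcases dChain_rel.1 (hxle h) with rfl | ⟨h1, h2⟩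
          · exact dChain_rel.2 (Or.inl rfl)
          · rcases Nat.lt_or_ge a.val (js.val + 1) with ha | ha
            · rcases Nat.lt_or_ge b.val (js.val + 1) with hb | hb
              · exact dChain_rel.2 (Or.inr ⟨by omega, by omega⟩)
              · have hb1 : b = j1 := Fin.ext (by omega)
                exact absurd (hb1 ▸ h) (by
                  intro hc
                  exact hex a (by omega) hc)
            · have ha1 : a = j1 := Fin.ext (by omega)
              rcases Nat.lt_or_ge b.val (js.val + 1) with hb | hb
              · exact absurd (ha1 ▸ x.val.symm h) (by
                  intro hc
                  exact hex b (by omega) hc)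
              · have hb1 : b = j1 := Fin.ext (by omega)
                rw [ha1, hb1]

lemma Good.sup {C' : Set (NCP n)} {f g : NCP n → ℕ} (hf : Good C' f) (hg : Good C' g) :
    Good C' (f ⊔ g) := fun R hR S hS h =>
  sup_le_sup (hf R hR S hS h) (hg R hR S hS h)

lemma Good.inf {C' : Set (NCP n)} {f g : NCP n → ℕ} (hf : Good C' f) (hg : Good C' g) :
    Good C' (f ⊓ g) := fun R hR S hS h =>
  inf_le_inf (hf R hR S hS h) (hg R hR S hS h)

lemma M_chain_property (n : ℕ) (hn : 1 ≤ n) (C : Set (NCP n)) (hC : IsChain (· ≤ ·) C) :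
    ∃ L : Set (NCP n), C ∪ Set.range (dChain n) ⊆ L ∧ LatClosed L ∧ DistribOn L := by
  classical
  set C' : Set (NCP n) := insert (botN n) (insert (topN n) C) with hC'
  have hch : IsChain (· ≤ ·) C' := by
    apply IsChain.insert
    · apply IsChain.insert hC
      intro b _ _
      exact Or.inr (le_topN b)
    · intro b _ _
      exact Or.inl (botN_le b)
  have hbot : botN n ∈ C' := Set.mem_insert _ _
  have htop : topN n ∈ C' := by rw [hC']; right; left; rfl
  refine ⟨{P | ∃ f : NCP n → ℕ, Good C' f ∧ P = Gs C' f}, ?_, ⟨?_, ?_⟩, ?_⟩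
  · rintro x (hx | ⟨j, rfl⟩)
    · obtain ⟨f, hf, hfx⟩ := repr_mem_chain C' (show x ∈ C' by rw [hC']; right; right; exact hx)
      exact ⟨f, hf, hfx.symm⟩
    · obtain ⟨f, hf, hfx⟩ := repr_mem_dchain hbot j
      exact ⟨f, hf, hfx.symm⟩
  · rintro x ⟨f, hf, rfl⟩ y ⟨g, hg, rfl⟩ z hz
    exact ⟨f ⊔ g, hf.sup hg, hz.unique (isLUB_Gs C' hch htop f g hf hg)⟩
  · rintro x ⟨f, hf, rfl⟩ y ⟨g, hg, rfl⟩ z hz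
    exact ⟨f ⊓ g, hf.inf hg, hz.unique (isGLB_Gs C' f g)⟩
  · rintro x ⟨f, hf, rfl⟩ y ⟨g, hg, rfl⟩ z ⟨h, hh, rfl⟩ a b p q r ha hb hp hq hr
    have ha' : a = Gs C' (g ⊔ h) := ha.unique (isLUB_Gs C' hch htop g h hg hh)
    subst ha'
    have hb' : b = Gs C' (f ⊓ (g ⊔ h)) := hb.unique (isGLB_Gs C' f (g ⊔ h))
    have hp' : p = Gs C' (f ⊓ g) := hp.unique (isGLB_Gs C' f g)
    have hq' : q = Gs C' (f ⊓ h) := hq.unique (isGLB_Gs C' f h)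
    subst hp'; subst hq'
    have hr' : r = Gs C' ((f ⊓ g) ⊔ (f ⊓ h)) :=
      hr.unique (isLUB_Gs C' hch htop _ _ (hf.inf hg) (hf.inf hh))
    rw [hb', hr', inf_sup_left]


/-- `NCP n` is a lattice and the chain `π_0 < π_1 < ⋯ < π_{n-1}`, where
`π_k` has unique non-singleton block `{1, …, k+1}`, is an M-chain; in particular
`NCP n` is supersolvable. -/
theorem NCP_supersolvable (n : ℕ) (hn : 1 ≤ n) :
    (∀ x y : NCP n, (∃ z, IsLUB {x, y} z) ∧ ∃ z, IsGLB {x, y} z) ∧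
    IsMaxChain (· ≤ ·) (Set.range (dChain n)) ∧
    (∀ C : Set (NCP n), IsChain (· ≤ ·) C →
      ∃ L : Set (NCP n), C ∪ Set.range (dChain n) ⊆ L ∧ LatClosed L ∧ DistribOn L) ∧
    SupersolvablePoset (NCP n) := by
  refine ⟨fun x y => ⟨⟨_, isLUB_pair x y⟩, ⟨_, isGLB_pair x y⟩⟩, dChain_maxChain hn,
    M_chain_property n hn, ?_⟩
  exact ⟨Set.range (dChain n), dChain_maxChain hn, M_chain_property n hn⟩

end NCPaper
end
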